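/- arXiv:0806.1255 — 4 statements merged into one kernel-verified Lean document; each statement's English description precedes it below -/
import Mathlib

section
/- Let n ≥ 1 and k ≥ 0. Suppose given, for each subset S ⊆ {0,…,n}, a finite-dimensional real vector space X(S), linear maps tr_{S,S'} : X(S) → X(S') for all S' ⊆ S, and linear maps E_{S',S} : X(S') → X(S) for all S' ⊆ S, satisfying: (i) tr_{S,S} = id; (ii) tr_{S',S''} ∘ tr_{S,S'} = tr_{S,S''} whenever S'' ⊆ S' ⊆ S; (iii) each tr_{S,S'} is surjective; (iv) X(S) = 0 whenever |S| ≤ k; (v) tr_{S,S'} ∘ E_{S',S} = id on X(S') whenever S' ⊆ S; (vi) (consistency) tr_{H,G} ∘ E_{F,H} = E_{F∩G,G} ∘ tr_{F,F∩G} whenever F, G ⊆ H ⊆ {0,…,n}. For S ⊆ {0,…,n} let X̊(S) := {ω ∈ X(S) : tr_{S,S'} ω = 0 for every proper subset S' ⊊ S}. Then, with N := {0,…,n}, X(N) is the internal direct sum X(N) = ⊕_{S ⊆ N} E_{S,N}(X̊(S)). -/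
noncomputable section

namespace GeomDecompAux

variable {n : ℕ} {X : Finset (Fin (n + 1)) → Type}
  [∀ S, AddCommGroup (X S)] [∀ S, Module ℝ (X S)]

def tr' (tr : ∀ S S' : Finset (Fin (n + 1)), S' ⊆ S → (X S →ₗ[ℝ] X S'))
    (S S' : Finset (Fin (n + 1))) : X S →ₗ[ℝ] X S' :=
  if h : S' ⊆ S then tr S S' h else 0

def E' (E : ∀ S' S : Finset (Fin (n + 1)), S' ⊆ S → (X S' →ₗ[ℝ] X S))
    (S' S : Finset (Fin (n + 1))) : X S' →ₗ[ℝ] X S :=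
  if h : S' ⊆ S then E S' S h else 0

theorem tr'_eq (tr : ∀ S S' : Finset (Fin (n + 1)), S' ⊆ S → (X S →ₗ[ℝ] X S'))
    {S S' : Finset (Fin (n + 1))} (h : S' ⊆ S) : tr' tr S S' = tr S S' h := dif_pos h

theorem E'_eq (E : ∀ S' S : Finset (Fin (n + 1)), S' ⊆ S → (X S' →ₗ[ℝ] X S))
    {S' S : Finset (Fin (n + 1))} (h : S' ⊆ S) : E' E S' S = E S' S h := dif_pos h


def eta (tr : ∀ S S' : Finset (Fin (n + 1)), S' ⊆ S → (X S →ₗ[ℝ] X S'))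
    (E : ∀ S' S : Finset (Fin (n + 1)), S' ⊆ S → (X S' →ₗ[ℝ] X S))
    (ω : X Finset.univ) (S : Finset (Fin (n + 1))) : X S :=
  tr' tr Finset.univ S ω -
    ∑ T ∈ S.ssubsets.attach, E' E T.1 S (eta tr E ω T.1)
termination_by S.card
decreasing_by exact Finset.card_lt_card (Finset.mem_ssubsets.mp T.2)

theorem eta_spec (tr : ∀ S S' : Finset (Fin (n + 1)), S' ⊆ S → (X S →ₗ[ℝ] X S'))
    (E : ∀ S' S : Finset (Fin (n + 1)), S' ⊆ S → (X S' →ₗ[ℝ] X S))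
    (ω : X Finset.univ) (S : Finset (Fin (n + 1))) :
    eta tr E ω S = tr' tr Finset.univ S ω -
      ∑ T ∈ S.ssubsets, E' E T S (eta tr E ω T) := by
  rw [eta, ← Finset.sum_attach S.ssubsets (fun T => E' E T S (eta tr E ω T))]

section Hyps


variable (tr : ∀ S S' : Finset (Fin (n + 1)), S' ⊆ S → (X S →ₗ[ℝ] X S'))
variable (E : ∀ S' S : Finset (Fin (n + 1)), S' ⊆ S → (X S' →ₗ[ℝ] X S))
variable (h_tr_refl : ∀ S, tr S S (subset_refl S) = LinearMap.id)
variable (h_tr_comp : ∀ (S S' S'' : Finset (Fin (n + 1))) (h1 : S' ⊆ S) (h2 : S'' ⊆ S'),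
      (tr S' S'' h2).comp (tr S S' h1) = tr S S'' (h2.trans h1))
variable (h_E_tr : ∀ (S' S : Finset (Fin (n + 1))) (h : S' ⊆ S),
      (tr S S' h).comp (E S' S h) = LinearMap.id)
variable (h_consist : ∀ (F G H : Finset (Fin (n + 1))) (hF : F ⊆ H) (hG : G ⊆ H),
      (tr H G hG).comp (E F H hF) =
        (E (F ∩ G) G Finset.inter_subset_right).comp
          (tr F (F ∩ G) Finset.inter_subset_left))

include h_tr_refl in
theorem tr'_refl (S : Finset (Fin (n + 1))) : tr' tr S S = LinearMap.id := by
  rw [tr'_eq tr (subset_refl S), h_tr_refl]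

include h_tr_comp in
theorem tr'_comp {S S' S'' : Finset (Fin (n + 1))} (h1 : S' ⊆ S) (h2 : S'' ⊆ S')
    (ξ : X S) : tr' tr S' S'' (tr' tr S S' ξ) = tr' tr S S'' ξ := by
  rw [tr'_eq tr h1, tr'_eq tr h2, tr'_eq tr (h2.trans h1), ← h_tr_comp S S' S'' h1 h2]
  rfl

include h_consist in
theorem consist' {F G H : Finset (Fin (n + 1))} (hF : F ⊆ H) (hG : G ⊆ H) (ξ : X F) :
    tr' tr H G (E' E F H ξ) = E' E (F ∩ G) G (tr' tr F (F ∩ G) ξ) := by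
  rw [tr'_eq tr hG, E'_eq E hF, E'_eq E (Finset.inter_subset_right (s₁ := F) (s₂ := G)),
    tr'_eq tr (Finset.inter_subset_left (s₁ := F) (s₂ := G)), ← LinearMap.comp_apply,
    h_consist F G H hF hG]
  rfl

include h_tr_refl h_E_tr in
theorem E'_self {T : Finset (Fin (n + 1))} (ξ : X T) : E' E T T ξ = ξ := by
  have h : tr T T (subset_refl T) (E T T (subset_refl T) ξ) = ξ :=
    congrFun (congrArg DFunLike.coe (h_E_tr T T (subset_refl T))) ξ
  rw [h_tr_refl T] at h
  rw [E'_eq E (subset_refl T)]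
  exact h

include h_tr_refl h_consist in
theorem trE'_eq {T S' S : Finset (Fin (n + 1))} (hT : T ⊆ S) (hS' : S' ⊆ S)
    (hTS' : T ⊆ S') (ξ : X T) : tr' tr S S' (E' E T S ξ) = E' E T S' ξ := by
  rw [consist' tr E h_consist hT hS' ξ]
  have heq : T ∩ S' = T := Finset.inter_eq_left.mpr hTS'
  rw [heq, tr'_refl tr h_tr_refl]
  rfl

include h_consist in
theorem trE'_zero {T S' S : Finset (Fin (n + 1))} (hT : T ⊆ S) (hS' : S' ⊆ S)
    (hTS' : ¬ T ⊆ S') (ξ : X T)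
    (hξ : ∀ (S'' : Finset (Fin (n + 1))), S'' ⊆ T → S'' ≠ T → tr' tr T S'' ξ = 0) :
    tr' tr S S' (E' E T S ξ) = 0 := by
  rw [consist' tr E h_consist hT hS' ξ,
    hξ (T ∩ S') Finset.inter_subset_left (fun h => hTS' (h ▸ Finset.inter_subset_right)),
    map_zero]


include h_tr_refl h_tr_comp h_E_tr h_consist in
theorem eta_mem (ω : X Finset.univ) :
    ∀ S S' : Finset (Fin (n + 1)), ∀ _ : S' ⊆ S, S' ≠ S →
      tr' tr S S' (eta tr E ω S) = 0 := by
  intro S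
  induction S using Finset.strongInduction with
  | _ S ih =>
    intro S' hS' hne
    have hss : S' ⊂ S := ssubset_of_subset_of_ne hS' hne
    rw [eta_spec, map_sub, map_sum, tr'_comp tr h_tr_comp (Finset.subset_univ S) hS' ω]
    have h1 : S'.powerset ⊆ S.ssubsets := fun T hT =>
      Finset.mem_ssubsets.mpr (lt_of_le_of_lt (Finset.mem_powerset.mp hT) hss)
    have h2 : ∀ T ∈ S.ssubsets, T ∉ S'.powerset →
        tr' tr S S' (E' E T S (eta tr E ω T)) = 0 := by
      intro T hT hT'
      exact trE'_zero tr E h_consist (Finset.mem_ssubsets.mp hT).subset hS'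
        (fun h => hT' (Finset.mem_powerset.mpr h)) _
        (fun S'' h hne' => ih T (Finset.mem_ssubsets.mp hT) S'' h hne')
    have hsum : ∑ T ∈ S.ssubsets, tr' tr S S' (E' E T S (eta tr E ω T))
        = ∑ T ∈ S'.powerset, E' E T S' (eta tr E ω T) := by
      rw [← Finset.sum_subset h1 h2]
      exact Finset.sum_congr rfl fun T hT =>
        trE'_eq tr E h_tr_refl h_consist ((Finset.mem_powerset.mp hT).trans hS') hS'
          (Finset.mem_powerset.mp hT) _
    rw [hsum, ← Finset.add_sum_erase _ _ (Finset.mem_powerset_self S')]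
    have he : S'.powerset.erase S' = S'.ssubsets := rfl
    rw [he, E'_self tr E h_tr_refl h_E_tr, eta_spec]
    abel

include h_tr_refl h_E_tr in
theorem eta_sum (ω : X Finset.univ) :
    ∑ S : Finset (Fin (n + 1)), E' E S Finset.univ (eta tr E ω S) = ω := by
  have h := eta_spec tr E ω Finset.univ
  rw [tr'_refl tr h_tr_refl] at h
  have key : ∑ S ∈ (Finset.univ : Finset (Fin (n + 1))).powerset,
      E' E S Finset.univ (eta tr E ω S) = ω := by
    rw [← Finset.add_sum_erase _ _ (Finset.mem_powerset_self _)]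
    have he : (Finset.univ : Finset (Fin (n + 1))).powerset.erase Finset.univ
        = (Finset.univ : Finset (Fin (n + 1))).ssubsets := rfl
    rw [he, E'_self tr E h_tr_refl h_E_tr, h]
    simp only [LinearMap.id_coe, id_eq]
    abel
  rwa [Finset.powerset_univ] at key

end Hyps


end GeomDecompAux


/-- The subspace `X̊(S)` of elements of `X(S)` whose traces on all proper subfaces vanish. -/
def zeroTraceSub {n : ℕ} (X : Finset (Fin (n + 1)) → Type)
    [∀ S, AddCommGroup (X S)] [∀ S, Module ℝ (X S)]
    (tr : ∀ S S' : Finset (Fin (n + 1)), S' ⊆ S → (X S →ₗ[ℝ] X S'))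
    (S : Finset (Fin (n + 1))) : Submodule ℝ (X S) where
  carrier := {ω | ∀ (S' : Finset (Fin (n + 1))) (h : S' ⊆ S), S' ≠ S → tr S S' h ω = 0}
  add_mem' := by
    intro a b ha hb S' h hne
    rw [map_add, ha S' h hne, hb S' h hne, add_zero]
  zero_mem' := by intro S' h hne; exact map_zero _
  smul_mem' := by
    intro c a ha S' h hne
    rw [map_smul, ha S' h hne, smul_zero]

/-- given a consistent family of extension operators on the face lattice of an
`n`-simplex, the space `X(N)` associated to the whole simplex decomposes as the internal direct
sum over the subsets `S ⊆ {0,…,n}` of the extensions of the zero-trace subspaces `X̊(S)`. -/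
theorem stmt1 (n k : ℕ) (hn : 1 ≤ n)
    (X : Finset (Fin (n + 1)) → Type)
    [∀ S, AddCommGroup (X S)] [∀ S, Module ℝ (X S)] [∀ S, FiniteDimensional ℝ (X S)]
    (tr : ∀ S S' : Finset (Fin (n + 1)), S' ⊆ S → (X S →ₗ[ℝ] X S'))
    (E : ∀ S' S : Finset (Fin (n + 1)), S' ⊆ S → (X S' →ₗ[ℝ] X S))
    (h_tr_refl : ∀ S, tr S S (subset_refl S) = LinearMap.id)
    (h_tr_comp : ∀ (S S' S'' : Finset (Fin (n + 1))) (h1 : S' ⊆ S) (h2 : S'' ⊆ S'),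
      (tr S' S'' h2).comp (tr S S' h1) = tr S S'' (h2.trans h1))
    (h_tr_surj : ∀ (S S' : Finset (Fin (n + 1))) (h : S' ⊆ S),
      Function.Surjective (tr S S' h))
    (h_low : ∀ S : Finset (Fin (n + 1)), S.card ≤ k → ∀ ξ : X S, ξ = 0)
    (h_E_tr : ∀ (S' S : Finset (Fin (n + 1))) (h : S' ⊆ S),
      (tr S S' h).comp (E S' S h) = LinearMap.id)
    (h_consist : ∀ (F G H : Finset (Fin (n + 1))) (hF : F ⊆ H) (hG : G ⊆ H),
      (tr H G hG).comp (E F H hF) =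
        (E (F ∩ G) G Finset.inter_subset_right).comp
          (tr F (F ∩ G) Finset.inter_subset_left)) :
    DirectSum.IsInternal fun S : Finset (Fin (n + 1)) =>
      Submodule.map (E S Finset.univ (Finset.subset_univ S)) (zeroTraceSub X tr S) := by
    classical
  set M : Finset (Fin (n + 1)) → Submodule ℝ (X Finset.univ) := fun S =>
    Submodule.map (E S Finset.univ (Finset.subset_univ S)) (zeroTraceSub X tr S) with hM
  constructor
  · -- injectivity
    rw [injective_iff_map_eq_zero]
    intro y hy
    have hsum : ∑ S : Finset (Fin (n + 1)), ((y S : X Finset.univ)) = 0 := by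
      calc ∑ S : Finset (Fin (n + 1)), ((y S : X Finset.univ))
          = ∑ S ∈ DFinsupp.support y, ((y S : X Finset.univ)) :=
            (Finset.sum_subset (Finset.subset_univ _) (fun S _ hS => by
              rw [DFinsupp.notMem_support_iff.mp hS]; rfl)).symm
        _ = DirectSum.coeAddMonoidHom M (∑ i ∈ DFinsupp.support y,
              DirectSum.of (fun S => ↥(M S)) i (y i)) := by
            rw [map_sum]
            exact Finset.sum_congr rfl fun i _ => (DirectSum.coeAddMonoidHom_of M i (y i)).symm
        _ = 0 := by rw [DirectSum.sum_support_of y, hy]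
    have key : ∀ T : Finset (Fin (n + 1)), ((y T : X Finset.univ)) = 0 := by
      intro T
      induction T using Finset.strongInduction with
      | _ T ih =>
        have h0 : ∑ S : Finset (Fin (n + 1)),
            GeomDecompAux.tr' tr Finset.univ T ((y S : X Finset.univ)) = 0 := by
          rw [← map_sum, hsum, map_zero]
        have hz : ∀ S : Finset (Fin (n + 1)), S ∈ Finset.univ → S ≠ T →
            GeomDecompAux.tr' tr Finset.univ T ((y S : X Finset.univ)) = 0 := by
          intro S _ hne
          by_cases hsub : S ⊆ T
          · rw [ih S (ssubset_of_subset_of_ne hsub hne), map_zero]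
          · obtain ⟨ξ, hξmem, hξeq⟩ := Submodule.mem_map.mp (y S).2
            rw [← hξeq, ← GeomDecompAux.E'_eq E (Finset.subset_univ S)]
            exact GeomDecompAux.trE'_zero tr E h_consist (Finset.subset_univ S)
              (Finset.subset_univ T) hsub ξ
              (fun S'' h hne' => by
                rw [GeomDecompAux.tr'_eq tr h]; exact hξmem S'' h hne')
        rw [Finset.sum_eq_single T hz (fun h => absurd (Finset.mem_univ T) h)] at h0
        obtain ⟨ξ, hξmem, hξeq⟩ := Submodule.mem_map.mp (y T).2
        have h2 : GeomDecompAux.tr' tr Finset.univ T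
            (E T Finset.univ (Finset.subset_univ T) ξ) = ξ := by
          rw [GeomDecompAux.tr'_eq tr (Finset.subset_univ T), ← LinearMap.comp_apply,
            h_E_tr T Finset.univ (Finset.subset_univ T)]
          rfl
        rw [← hξeq] at h0 ⊢
        rw [h2.symm.trans h0, map_zero]
    exact DFinsupp.ext fun T => Subtype.ext (key T)
  · -- surjectivity
    intro ω
    refine ⟨∑ S : Finset (Fin (n + 1)), DirectSum.of (fun S => ↥(M S)) S
      ⟨GeomDecompAux.E' E S Finset.univ (GeomDecompAux.eta tr E ω S), ?_⟩, ?_⟩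
    · exact Submodule.mem_map.mpr ⟨GeomDecompAux.eta tr E ω S,
        (fun S' h hne => by
          have := GeomDecompAux.eta_mem tr E h_tr_refl h_tr_comp h_E_tr h_consist ω S S' h hne
          rwa [GeomDecompAux.tr'_eq tr h] at this),
        by rw [← GeomDecompAux.E'_eq E (Finset.subset_univ S)]⟩
    · rw [map_sum]
      calc ∑ S : Finset (Fin (n + 1)), DirectSum.coeAddMonoidHom M
            (DirectSum.of (fun S => ↥(M S)) S
              ⟨GeomDecompAux.E' E S Finset.univ (GeomDecompAux.eta tr E ω S), _⟩)
          = ∑ S : Finset (Fin (n + 1)),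
              GeomDecompAux.E' E S Finset.univ (GeomDecompAux.eta tr E ω S) := by
            exact Finset.sum_congr rfl fun S _ => DirectSum.coeAddMonoidHom_of M S _
        _ = ω := GeomDecompAux.eta_sum tr E h_tr_refl h_E_tr ω
end
end

section
/- Let r ≥ 1 and 0 ≤ k ≤ n. The set {λ^α dλ_σ : α ∈ ℕ^{n+1}, |α| = r, σ : {1,…,k} → {0,…,n} increasing} spans P_rΛ^k, and the family {λ^α dλ_σ : α ∈ ℕ^{n+1}, |α| = r, σ : {1,…,k} → {1,…,n} increasing} (i.e., those σ with 0 ∉ ⟦σ⟧) is a basis of P_rΛ^k. -/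
open scoped BigOperators

noncomputable section

/-- The wedge product of `k` linear functionals on `ℝⁿ`:
`(wedge f) v = det (matrix whose (j,i) entry is f i (v j))`. -/
def wedge {n k : ℕ} (f : Fin k → ((Fin n → ℝ) →ₗ[ℝ] ℝ)) :
    (Fin n → ℝ) [⋀^Fin k]→ₗ[ℝ] ℝ :=
  (Matrix.detRowAlternating : (Fin k → ℝ) [⋀^Fin k]→ₗ[ℝ] ℝ).compLinearMap
    (LinearMap.pi f)

/-- The wedge product of a linear functional (a `1`-form) with an alternating `k`-form on `ℝⁿ`. -/
def oneWedge {n k : ℕ} (f : (Fin n → ℝ) →ₗ[ℝ] ℝ)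
    (η : (Fin n → ℝ) [⋀^Fin k]→ₗ[ℝ] ℝ) :
    (Fin n → ℝ) [⋀^Fin (k + 1)]→ₗ[ℝ] ℝ :=
  ((TensorProduct.lid ℝ ℝ).toLinearMap.compAlternatingMap
    (AlternatingMap.domCoprod
      ((AlternatingMap.ofSubsingleton ℝ (Fin n → ℝ) ℝ (0 : Fin 1)) f) η)).domDomCongr
    (finSumFinEquiv.trans (finCongr (Nat.add_comm 1 k)))

/-- A nondegenerate simplex in `ℝⁿ` with vertices `x 0, …, x n`, together with its barycentric
coordinate functions `λ_i = dlam i + c i`: the unique affine functions with `λ_i (x j) = δ_{ij}`,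
`dlam i` being the linear part `dλ_i`. -/
structure Simplex (n : ℕ) where
  x : Fin (n + 1) → (Fin n → ℝ)
  affineIndep : AffineIndependent ℝ x
  dlam : Fin (n + 1) → ((Fin n → ℝ) →ₗ[ℝ] ℝ)
  c : Fin (n + 1) → ℝ
  lam_vertex : ∀ i j, dlam i (x j) + c i = if i = j then 1 else 0

namespace Simplex

variable {n : ℕ} (B : Simplex n)

/-- The barycentric coordinate function `λ_i`. -/
def lam (i : Fin (n + 1)) (y : Fin n → ℝ) : ℝ := B.dlam i y + B.c i

/-- The barycentric monomial `λ^α = λ_0^{α_0} ⋯ λ_n^{α_n}`. -/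
def lamPow (α : Fin (n + 1) → ℕ) (y : Fin n → ℝ) : ℝ := ∏ i, (B.lam i y) ^ (α i)

/-- `dλ_σ = dλ_{σ 0} ∧ ⋯ ∧ dλ_{σ (k-1)}`. -/
def dlamWedge {k : ℕ} (σ : Fin k → Fin (n + 1)) : (Fin n → ℝ) [⋀^Fin k]→ₗ[ℝ] ℝ :=
  wedge fun j => B.dlam (σ j)

/-- The Whitney form `φ_σ = Σ_i (-1)^i λ_{σ i} dλ_{σ 0} ∧ ⋯ ∧ (omit dλ_{σ i}) ∧ ⋯ ∧ dλ_{σ k}`. -/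
def whitney {k : ℕ} (σ : Fin (k + 1) → Fin (n + 1)) (y : Fin n → ℝ) :
    (Fin n → ℝ) [⋀^Fin k]→ₗ[ℝ] ℝ :=
  ∑ i : Fin (k + 1), ((-1 : ℝ) ^ (i : ℕ) * B.lam (σ i) y) •
    wedge fun j : Fin k => B.dlam (σ (i.succAbove j))

/-- The tangent space `T_S = ∩_{i ∉ S} ker dλ_i` of the face `f_S`. -/
def tangent (S : Finset (Fin (n + 1))) : Set (Fin n → ℝ) :=
  {v | ∀ i ∉ S, B.dlam i v = 0}

/-- `ψ^{α,S}_i = dλ_i - (α_i / r) Σ_{j ∈ S} dλ_j`. -/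
def psi (α : Fin (n + 1) → ℕ) (r : ℕ) (S : Finset (Fin (n + 1))) (i : Fin (n + 1)) :
    (Fin n → ℝ) →ₗ[ℝ] ℝ :=
  B.dlam i - ((α i : ℝ) / (r : ℝ)) • ∑ j ∈ S, B.dlam j

/-- `ψ^{α,S}_σ = ψ^{α,S}_{σ 1} ∧ ⋯ ∧ ψ^{α,S}_{σ k}`. -/
def psiWedge {k : ℕ} (α : Fin (n + 1) → ℕ) (r : ℕ) (S : Finset (Fin (n + 1)))
    (σ : Fin k → Fin (n + 1)) : (Fin n → ℝ) [⋀^Fin k]→ₗ[ℝ] ℝ :=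
  wedge fun j => B.psi α r S (σ j)

/-- The list of direction vectors `x_j - x_l`, with `x_j - x_l` repeated `α j` times. -/
def dirList (α : Fin (n + 1) → ℕ) (l : Fin (n + 1)) : List (Fin n → ℝ) :=
  (List.finRange (n + 1)).flatMap fun j => List.replicate (α j) (B.x j - B.x l)

end Simplex

/-- The support `⟦α⟧` of a multi-index. -/
def suppF {n : ℕ} (α : Fin (n + 1) → ℕ) : Finset (Fin (n + 1)) :=
  Finset.univ.filter fun i => α i ≠ 0

/-- The range `⟦σ⟧` of an (increasing) map, as a finset. -/
def rangeF {n k : ℕ} (σ : Fin k → Fin (n + 1)) : Finset (Fin (n + 1)) :=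
  Finset.image σ Finset.univ

/-- `f : ℝⁿ → ℝ` is a polynomial function of (total) degree at most `r`. -/
def IsPolyDeg {n : ℕ} (r : ℕ) (f : (Fin n → ℝ) → ℝ) : Prop :=
  ∃ p : MvPolynomial (Fin n) ℝ, p.totalDegree ≤ r ∧ ∀ y, MvPolynomial.eval y p = f y

/-- `P_r`: the space of polynomial functions on `ℝⁿ` of degree at most `r`. -/
def Pscalar (n r : ℕ) : Submodule ℝ ((Fin n → ℝ) → ℝ) where
  carrier := {f | IsPolyDeg r f}
  add_mem' := by
    rintro f g ⟨p, hp, hpe⟩ ⟨q, hq, hqe⟩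
    exact ⟨p + q, le_trans (MvPolynomial.totalDegree_add p q) (max_le hp hq),
      fun y => by simp [hpe y, hqe y]⟩
  zero_mem' := ⟨0, by simp, fun y => by simp⟩
  smul_mem' := by
    rintro a f ⟨p, hp, hpe⟩
    exact ⟨a • p, le_trans (MvPolynomial.totalDegree_smul_le a p) hp,
      fun y => by simp [MvPolynomial.smul_eq_C_mul, hpe y]⟩

/-- `P_r Λ^k`: the space of polynomial differential `k`-forms of degree at most `r` on `ℝⁿ`. -/
def PLambda (n r k : ℕ) :
    Submodule ℝ ((Fin n → ℝ) → ((Fin n → ℝ) [⋀^Fin k]→ₗ[ℝ] ℝ)) where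
  carrier := {ω | ∀ v : Fin k → (Fin n → ℝ), IsPolyDeg r fun y => ω y v}
  add_mem' := by
    intro ω η hω hη v
    exact (Pscalar n r).add_mem (hω v) (hη v)
  zero_mem' := fun v => (Pscalar n r).zero_mem
  smul_mem' := by
    intro a ω hω v
    exact (Pscalar n r).smul_mem a (hω v)

/-- The Koszul operator `κ`, contracting a `(k+1)`-form field with the position vector. -/
def koszulHom (n k : ℕ) :
    ((Fin n → ℝ) → ((Fin n → ℝ) [⋀^Fin (k + 1)]→ₗ[ℝ] ℝ)) →ₗ[ℝ]
      ((Fin n → ℝ) → ((Fin n → ℝ) [⋀^Fin k]→ₗ[ℝ] ℝ)) where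
  toFun ω := fun y => (ω y).curryLeft y
  map_add' ω η := by funext y; simp
  map_smul' a ω := by funext y; simp

/-- `P⁻_r Λ^k = P_{r-1} Λ^k + κ (P_{r-1} Λ^{k+1})`. -/
def PminusLambda (n r k : ℕ) :
    Submodule ℝ ((Fin n → ℝ) → ((Fin n → ℝ) [⋀^Fin k]→ₗ[ℝ] ℝ)) :=
  PLambda n (r - 1) k ⊔ Submodule.map (koszulHom n k) (PLambda n (r - 1) (k + 1))

/-- `ω` has vanishing trace on the face `f_S`. -/
def VanishTrace {n k : ℕ} (B : Simplex n) (S : Finset (Fin (n + 1)))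
    (ω : (Fin n → ℝ) → ((Fin n → ℝ) [⋀^Fin k]→ₗ[ℝ] ℝ)) : Prop :=
  ∀ y : Fin n → ℝ, (∀ i ∉ S, B.lam i y = 0) →
    ∀ v : Fin k → (Fin n → ℝ), (∀ j, v j ∈ B.tangent S) → ω y v = 0

/-- Forms having vanishing trace on every face `f_S` with `|S| = n`
(the codimension-one faces). -/
def traceZeroSub {n : ℕ} (B : Simplex n) (k : ℕ) :
    Submodule ℝ ((Fin n → ℝ) → ((Fin n → ℝ) [⋀^Fin k]→ₗ[ℝ] ℝ)) where
  carrier := {ω | ∀ S : Finset (Fin (n + 1)), S.card = n → VanishTrace B S ω}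
  add_mem' := by
    intro ω η hω hη S hS y hy v hv
    simp only [Pi.add_apply, AlternatingMap.add_apply, hω S hS y hy v hv,
      hη S hS y hy v hv, add_zero]
  zero_mem' := by intro S hS y hy v hv; simp
  smul_mem' := by
    intro a ω hω S hS y hy v hv
    simp only [Pi.smul_apply, AlternatingMap.smul_apply, hω S hS y hy v hv, smul_zero]

/-- `P̊_r Λ^k`: polynomial forms with vanishing trace on the boundary. -/
def PLambdaZero {n : ℕ} (B : Simplex n) (r k : ℕ) :
    Submodule ℝ ((Fin n → ℝ) → ((Fin n → ℝ) [⋀^Fin k]→ₗ[ℝ] ℝ)) :=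
  PLambda n r k ⊓ traceZeroSub B k

/-- `P̊⁻_r Λ^k`: forms in `P⁻_r Λ^k` with vanishing trace on the boundary. -/
def PminusLambdaZero {n : ℕ} (B : Simplex n) (r k : ℕ) :
    Submodule ℝ ((Fin n → ℝ) → ((Fin n → ℝ) [⋀^Fin k]→ₗ[ℝ] ℝ)) :=
  PminusLambda n r k ⊓ traceZeroSub B k

/-- `f` vanishes to order `r` at `y`: all partial derivatives of order `< r` vanish at `y`. -/
def VanishOrder {n : ℕ} (r : ℕ) (f : (Fin n → ℝ) → ℝ) (y : Fin n → ℝ) : Prop :=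
  ∀ m : ℕ, m < r → iteratedFDeriv ℝ m f y = 0

/-- Iterated directional derivatives along a list of directions. -/
def dirDerivList {n : ℕ} : List (Fin n → ℝ) → ((Fin n → ℝ) → ℝ) → ((Fin n → ℝ) → ℝ)
  | [], f => f
  | t :: ts, f => dirDerivList ts fun y => fderiv ℝ f y t

section Aux

theorem wedge_apply {n k : ℕ} (f : Fin k → ((Fin n → ℝ) →ₗ[ℝ] ℝ)) (v : Fin k → (Fin n → ℝ)) :
    wedge f v = Matrix.det (Matrix.of fun j i => f i (v j)) := rfl

/-- Determinant of a 0-1 "matching" matrix of two strictly monotone tuples. -/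
theorem det_ite {k n : ℕ} (a b : Fin k → Fin n) (ha : StrictMono a) (hb : StrictMono b) :
    Matrix.det (Matrix.of fun j i => if a i = b j then (1:ℝ) else 0)
      = if a = b then 1 else 0 := by
  by_cases hab : a = b
  · subst hab
    rw [if_pos rfl]
    have : (Matrix.of fun j i => if a i = a j then (1:ℝ) else 0) = 1 := by
      ext j i
      simp [Matrix.one_apply, ha.injective.eq_iff, eq_comm]
    rw [this, Matrix.det_one]
  · rw [if_neg hab]
    have hcard : (Finset.image a Finset.univ).card = k := by
      rw [Finset.card_image_of_injective _ ha.injective, Finset.card_univ, Fintype.card_fin]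
    have hcardb : (Finset.image b Finset.univ).card = k := by
      rw [Finset.card_image_of_injective _ hb.injective, Finset.card_univ, Fintype.card_fin]
    have hne : Finset.image a Finset.univ ≠ Finset.image b Finset.univ := by
      intro h
      apply hab
      have h1 := Finset.orderEmbOfFin_unique hcard (f := a) (fun i => Finset.mem_image_of_mem a (Finset.mem_univ i)) ha
      have h2 := Finset.orderEmbOfFin_unique hcardb (f := b) (fun i => Finset.mem_image_of_mem b (Finset.mem_univ i)) hb
      have : Finset.orderEmbOfFin (Finset.image a Finset.univ) hcard
          = Finset.orderEmbOfFin (Finset.image b Finset.univ) hcardb := by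
        congr 1
      rw [h1, h2, this]
    by_cases hsub : ∀ i, a i ∈ Finset.image b Finset.univ
    · exfalso
      apply hne
      apply Finset.eq_of_subset_of_card_le
      · intro m hm
        obtain ⟨i, _, rfl⟩ := Finset.mem_image.mp hm
        exact hsub i
      · rw [hcard, hcardb]
    · push_neg at hsub
      obtain ⟨i0, hi0⟩ := hsub
      apply Matrix.det_eq_zero_of_column_eq_zero i0
      intro j
      simp only [Matrix.of_apply]
      rw [if_neg]
      intro h
      exact hi0 (h ▸ Finset.mem_image_of_mem b (Finset.mem_univ j))

end Aux
namespace Simplex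

variable {n : ℕ} (B : Simplex n)

/-- Edge vectors `x_{j+1} - x_0`. -/
def d (j : Fin n) : Fin n → ℝ := B.x j.succ - B.x 0

theorem dlam_d (i : Fin (n + 1)) (j : Fin n) :
    B.dlam i (B.d j) = (if i = j.succ then 1 else 0) - (if i = 0 then 1 else 0) := by
  have h1 := B.lam_vertex i j.succ
  have h0 := B.lam_vertex i 0
  have h : B.dlam i (B.d j) = B.dlam i (B.x j.succ) - B.dlam i (B.x 0) := by
    rw [d, map_sub]
  rw [h]; rw [eq_sub_of_add_eq h1, eq_sub_of_add_eq h0]; ring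

theorem dlam_succ_d (m j : Fin n) :
    B.dlam m.succ (B.d j) = if m = j then 1 else 0 := by
  rw [dlam_d]
  simp [Fin.succ_inj, Fin.succ_ne_zero]

theorem d_li : LinearIndependent ℝ B.d := by
  have h := (affineIndependent_iff_linearIndependent_vsub ℝ B.x 0).mp B.affineIndep
  have h2 := h.comp (fun j : Fin n => (⟨j.succ, Fin.succ_ne_zero j⟩ : {i : Fin (n + 1) // i ≠ 0}))
    (fun a b hab => Fin.succ_injective n (congrArg Subtype.val hab))
  have h3 : B.d = (fun i : {i : Fin (n + 1) // i ≠ 0} => B.x i -ᵥ B.x 0) ∘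
      (fun j : Fin n => (⟨j.succ, Fin.succ_ne_zero j⟩ : {i : Fin (n + 1) // i ≠ 0})) := by
    funext j
    simp [d, vsub_eq_sub]
  rw [h3]
  exact h2

theorem repr_d (hn : 1 ≤ n) (v : Fin n → ℝ) :
    v = ∑ j, B.dlam j.succ v • B.d j := by
  haveI : Nonempty (Fin n) := ⟨⟨0, hn⟩⟩
  set bD := basisOfLinearIndependentOfCardEqFinrank B.d_li
    (by rw [Fintype.card_fin, Module.finrank_fin_fun]) with hbDdef
  have hb : ⇑bD = B.d := coe_basisOfLinearIndependentOfCardEqFinrank _ _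
  have hv : v = ∑ j, bD.repr v j • B.d j := by
    conv_lhs => rw [← bD.sum_repr v]
    simp [hb]
  have hco : ∀ m, bD.repr v m = B.dlam m.succ v := by
    intro m
    conv_rhs => rw [hv]
    rw [map_sum]
    simp only [map_smul, dlam_succ_d, smul_eq_mul]
    rw [Finset.sum_congr rfl (fun j _ => by rw [mul_ite, mul_one, mul_zero]),
      Finset.sum_ite_eq Finset.univ m (fun j => bD.repr v j)]
    simp
  rw [Finset.sum_congr rfl (fun j _ => by rw [← hco j])]
  exact hv

theorem sum_dlam (hn : 1 ≤ n) (v : Fin n → ℝ) : ∑ i, B.dlam i v = 0 := by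
  have hv := B.repr_d hn v
  calc ∑ i, B.dlam i v = ∑ i, ∑ j, B.dlam j.succ v * B.dlam i (B.d j) := by
        refine Finset.sum_congr rfl fun i _ => ?_
        conv_lhs => rw [hv]
        rw [map_sum]; simp [smul_eq_mul]
    _ = ∑ j, B.dlam j.succ v * ∑ i, B.dlam i (B.d j) := by
        rw [Finset.sum_comm]
        exact Finset.sum_congr rfl fun j _ => (Finset.mul_sum _ _ _).symm
    _ = 0 := by
        refine Finset.sum_eq_zero fun j _ => ?_
        have : ∑ i, B.dlam i (B.d j) = 0 := by
          simp only [dlam_d, Finset.sum_sub_distrib]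
          simp
        rw [this, mul_zero]

theorem sum_lam (hn : 1 ≤ n) (y : Fin n → ℝ) : ∑ i, B.lam i y = 1 := by
  have hc : ∑ i, B.c i = 1 := by
    have h := fun i => B.lam_vertex i 0
    have : ∑ i, (B.dlam i (B.x 0) + B.c i) = 1 := by
      rw [Finset.sum_congr rfl (fun i _ => h i)]; simp
    rw [Finset.sum_add_distrib, B.sum_dlam hn] at this
    linarith
  unfold lam
  rw [Finset.sum_add_distrib, B.sum_dlam hn, hc, zero_add]

theorem lam_succ_eq (j : Fin n) (y : Fin n → ℝ) :
    B.lam j.succ y = B.dlam j.succ (y - B.x 0) := by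
  have h0 := B.lam_vertex j.succ 0
  rw [if_neg (Fin.succ_ne_zero j)] at h0
  rw [lam, map_sub]
  linarith

theorem point_repr (hn : 1 ≤ n) (y : Fin n → ℝ) :
    y = B.x 0 + ∑ j, B.lam j.succ y • B.d j := by
  have h := B.repr_d hn (y - B.x 0)
  rw [Finset.sum_congr rfl (fun j _ => by rw [← B.lam_succ_eq j y])] at h
  rw [← h]; abel

end Simplex
instance strictMonoDec {k n : ℕ} : DecidablePred (fun s : Fin k → Fin n => StrictMono s) :=
  fun s => decidable_of_iff (∀ a b : Fin k, a < b → s a < s b)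
    ⟨fun h a b hab => h a b hab, fun h a b hab => h hab⟩

theorem alt_sum_apply {n k : ℕ} {α : Type*} (s : Finset α)
    (f : α → ((Fin n → ℝ) [⋀^Fin k]→ₗ[ℝ] ℝ)) (v : Fin k → (Fin n → ℝ)) :
    (∑ a ∈ s, f a) v = ∑ a ∈ s, f a v := by
  classical
  induction s using Finset.induction with
  | empty => simp
  | insert _ _ h ih => rw [Finset.sum_insert h, Finset.sum_insert h, AlternatingMap.add_apply, ih]

namespace Simplex

variable {n : ℕ} (B : Simplex n)

theorem wedge_eval {k : ℕ} (s s' : Fin k → Fin n) (hs : StrictMono s) (hs' : StrictMono s') :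
    wedge (fun j => B.dlam (s' j).succ) (fun j => B.d (s j)) = if s' = s then 1 else 0 := by
  rw [wedge_apply]
  have h : (Matrix.of fun j i => B.dlam ((s' i).succ) (B.d (s j)))
      = Matrix.of fun j i => if s' i = s j then (1:ℝ) else 0 := by
    ext j i
    simp [dlam_succ_d]
  rw [h, det_ite s' s hs' hs]

theorem dlamWedge_eval {k : ℕ} (σ : Fin k → Fin (n + 1)) (hσ : StrictMono σ)
    (hσ0 : ∀ j, σ j ≠ 0) (s : Fin k → Fin n) (hs : StrictMono s) :
    B.dlamWedge σ (fun j => B.d (s j)) = if σ = (fun j => (s j).succ) then 1 else 0 := by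
  set s' : Fin k → Fin n := fun j => (σ j).pred (hσ0 j) with hs'def
  have hσs : σ = fun j => (s' j).succ := by
    funext j; rw [hs'def]; simp [Fin.succ_pred]
  have hs'mono : StrictMono s' := by
    intro a b hab
    have := hσ hab
    rw [hσs] at this
    exact Fin.succ_lt_succ_iff.mp this
  have he : (if s' = s then (1:ℝ) else 0) = if σ = (fun j => (s j).succ) then 1 else 0 := by
    congr 1
    simp only [eq_iff_iff]
    constructor
    · intro h; rw [hσs, h]
    · intro h
      funext j
      exact Fin.succ_injective n ((congrFun hσs j).symm.trans (congrFun h j))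
  rw [← he, dlamWedge, hσs]
  exact B.wedge_eval s s' hs hs'mono

theorem alt_expansion (hn : 1 ≤ n) {k : ℕ} (η : (Fin n → ℝ) [⋀^Fin k]→ₗ[ℝ] ℝ) :
    η = ∑ s : {s : Fin k → Fin n // StrictMono s},
      η (fun j => B.d (s.1 j)) • wedge (fun j => B.dlam ((s.1 j).succ)) := by
  haveI : Nonempty (Fin n) := ⟨⟨0, hn⟩⟩
  set bD := basisOfLinearIndependentOfCardEqFinrank B.d_li
    (by rw [Fintype.card_fin, Module.finrank_fin_fun]) with hbDdef
  have hb : ⇑bD = B.d := coe_basisOfLinearIndependentOfCardEqFinrank _ _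
  -- key: evaluation at sorted tuples
  have key : ∀ s : Fin k → Fin n, StrictMono s →
      (∑ s' : {s : Fin k → Fin n // StrictMono s},
        η (fun j => B.d (s'.1 j)) • wedge (fun j => B.dlam ((s'.1 j).succ)))
          (fun j => B.d (s j)) = η (fun j => B.d (s j)) := by
    intro s hs
    rw [alt_sum_apply]
    simp only [AlternatingMap.smul_apply]
    have : ∀ s' : {s : Fin k → Fin n // StrictMono s},
        η (fun j => B.d (s'.1 j)) • wedge (fun j => B.dlam ((s'.1 j).succ)) (fun j => B.d (s j))
          = if s' = (⟨s, hs⟩ : {s : Fin k → Fin n // StrictMono s}) then η (fun j => B.d (s j)) else 0 := by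
      intro s'
      rw [B.wedge_eval s s'.1 hs s'.2]
      by_cases h : s'.1 = s
      · rw [if_pos h, if_pos (Subtype.ext h), smul_eq_mul, mul_one, h]
      · rw [if_neg h, if_neg (fun hh => h (congrArg Subtype.val hh)), smul_eq_mul, mul_zero]
    rw [Finset.sum_congr rfl (fun s' _ => this s')]
    rw [Finset.sum_ite_eq' Finset.univ (⟨s, hs⟩ : {s : Fin k → Fin n // StrictMono s})
      (fun _ => η (fun j => B.d (s j)))]
    simp
  refine bD.ext_alternating fun v hv => ?_
  simp only [hb]
  -- sort v
  set π := Tuple.sort v with hπ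
  have hmono : Monotone (v ∘ π) := Tuple.monotone_sort v
  have hinj : Function.Injective (v ∘ π) := hv.comp π.injective
  have hsm : StrictMono (v ∘ π) := hmono.strictMono_of_injective hinj
  have hvfact : v = (v ∘ π) ∘ π.symm := by
    funext i; simp
  have h1 : (fun i => B.d (v i)) = (fun i => B.d ((v ∘ π) i)) ∘ π.symm := by
    funext i; simp
  rw [h1]
  have hperm := fun (f : (Fin n → ℝ) [⋀^Fin k]→ₗ[ℝ] ℝ) =>
    f.map_perm (fun i => B.d ((v ∘ π) i)) π.symm
  rw [hperm η, hperm _, key (v ∘ π) hsm]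

end Simplex
section Scalar

open MvPolynomial

instance fintypeSumLe (n r : ℕ) : Fintype {β : Fin n → ℕ // (∑ i, β i) ≤ r} :=
  Fintype.ofInjective
    (fun β : {β : Fin n → ℕ // (∑ i, β i) ≤ r} =>
      (fun i => (⟨β.1 i, by
        have h1 : β.1 i ≤ ∑ j, β.1 j :=
          Finset.single_le_sum (fun j _ => Nat.zero_le _) (Finset.mem_univ i)
        have := β.2
        omega⟩ : Fin (r + 1)) : Fin n → Fin (r + 1)))
    (by
      intro a b hab
      apply Subtype.ext; funext i
      exact congrArg Fin.val (congrFun hab i))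

instance fintypeSumEq (n r : ℕ) : Fintype {α : Fin n → ℕ // (∑ i, α i) = r} :=
  Fintype.ofInjective
    (fun α : {α : Fin n → ℕ // (∑ i, α i) = r} =>
      (⟨α.1, le_of_eq α.2⟩ : {β : Fin n → ℕ // (∑ i, β i) ≤ r}))
    (by
      intro a b hab
      have h2 := congrArg (fun z : {β : Fin n → ℕ // (∑ i, β i) ≤ r} => z.1) hab
      exact Subtype.ext h2)

/-- The coordinate monomial `y ↦ ∏ y i ^ β i`. -/
def mon {n : ℕ} (β : Fin n → ℕ) : (Fin n → ℝ) → ℝ := fun y => ∏ i, y i ^ β i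

theorem mon_mem {n r : ℕ} (β : Fin n → ℕ) (hβ : (∑ i, β i) ≤ r) : mon β ∈ Pscalar n r := by
  refine ⟨MvPolynomial.monomial (Finsupp.equivFunOnFinite.symm β) 1, ?_, ?_⟩
  · rw [MvPolynomial.totalDegree_monomial _ one_ne_zero,
      Finsupp.sum_fintype _ _ (fun _ => rfl)]
    simpa using hβ
  · intro y
    rw [MvPolynomial.eval_monomial, Finsupp.prod_fintype _ _ (fun _ => pow_zero _)]
    simp [mon]

theorem sum_update_succ {n : ℕ} (α : Fin n → ℕ) (i : Fin n) :
    ∑ j, Function.update α i (α i + 1) j = (∑ j, α j) + 1 := by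
  have h1 := Finset.add_sum_erase Finset.univ α (Finset.mem_univ i)
  have h2 := Finset.add_sum_erase Finset.univ (Function.update α i (α i + 1)) (Finset.mem_univ i)
  have h3 : ∑ j ∈ Finset.univ.erase i, Function.update α i (α i + 1) j
      = ∑ j ∈ Finset.univ.erase i, α j :=
    Finset.sum_congr rfl fun j hj => Function.update_of_ne (Finset.ne_of_mem_erase hj) _ _
  rw [Function.update_self] at h2
  omega

theorem mon_li (n r : ℕ) :
    LinearIndependent ℝ (fun β : {β : Fin n → ℕ // (∑ i, β i) ≤ r} => mon β.1) := by
  rw [Fintype.linearIndependent_iff]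
  intro c hc β₀
  set p : MvPolynomial (Fin n) ℝ :=
    ∑ β : {β : Fin n → ℕ // (∑ i, β i) ≤ r},
      MvPolynomial.C (c β) * MvPolynomial.monomial (Finsupp.equivFunOnFinite.symm β.1) 1
    with hp
  have hpz : p = 0 := by
    apply MvPolynomial.funext
    intro y
    rw [hp, map_sum]
    have hcy : ∑ β : {β : Fin n → ℕ // (∑ i, β i) ≤ r}, c β * mon β.1 y = 0 := by
      have := congrFun hc y
      rw [Finset.sum_apply] at this
      simpa [smul_eq_mul] using this
    simp only [map_zero]
    rw [← hcy]
    refine Finset.sum_congr rfl fun β _ => ?_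
    rw [map_mul, MvPolynomial.eval_C, MvPolynomial.eval_monomial,
      Finsupp.prod_fintype _ _ (fun _ => pow_zero _)]
    simp [mon]
  have hco := congrArg (MvPolynomial.coeff (Finsupp.equivFunOnFinite.symm β₀.1)) hpz
  rw [hp, MvPolynomial.coeff_sum] at hco
  simp only [MvPolynomial.coeff_C_mul, MvPolynomial.coeff_monomial, MvPolynomial.coeff_zero] at hco
  have hterm : ∀ β : {β : Fin n → ℕ // (∑ i, β i) ≤ r},
      (c β * if Finsupp.equivFunOnFinite.symm β.1 = Finsupp.equivFunOnFinite.symm β₀.1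
        then (1:ℝ) else 0) = if β = β₀ then c β else 0 := by
    intro β
    by_cases h : β = β₀
    · subst h; simp
    · rw [if_neg h, if_neg (fun hh =>
        h (Subtype.ext (Finsupp.equivFunOnFinite.symm.injective hh))), mul_zero]
  rw [Finset.sum_congr rfl (fun β _ => hterm β), Finset.sum_ite_eq' Finset.univ β₀ c] at hco
  simpa using hco

theorem Pscalar_le_monspan (n r : ℕ) :
    Pscalar n r ≤ Submodule.span ℝ {f | ∃ β : Fin n → ℕ, (∑ i, β i) ≤ r ∧ f = mon β} := by
  rintro f ⟨p, hp, hpe⟩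
  have hf : f = ∑ d ∈ p.support, MvPolynomial.coeff d p • mon (⇑d) := by
    funext y
    rw [← hpe y, MvPolynomial.eval_eq', Finset.sum_apply]
    refine Finset.sum_congr rfl fun d _ => ?_
    simp [mon, smul_eq_mul]
  rw [hf]
  refine Submodule.sum_mem _ fun d hd => Submodule.smul_mem _ _ (Submodule.subset_span ⟨⇑d, ?_, rfl⟩)
  have h1 : (d.sum fun _ e => e) ≤ p.totalDegree := MvPolynomial.le_totalDegree hd
  rw [Finsupp.sum_fintype _ _ (fun _ => rfl)] at h1
  omega

end Scalar
namespace Simplex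

variable {n : ℕ} (B : Simplex n)

theorem lamPow_update (α : Fin (n + 1) → ℕ) (i : Fin (n + 1)) (y : Fin n → ℝ) :
    B.lamPow (Function.update α i (α i + 1)) y = B.lam i y * B.lamPow α y := by
  unfold lamPow
  have h : (fun j => B.lam j y ^ (Function.update α i (α i + 1) j))
      = Function.update (fun j => B.lam j y ^ α j) i (B.lam i y ^ (α i + 1)) := by
    funext j
    by_cases hj : j = i
    · subst hj; simp
    · rw [Function.update_of_ne hj, Function.update_of_ne hj]
  calc ∏ j, B.lam j y ^ (Function.update α i (α i + 1) j)
      = ∏ j, Function.update (fun j => B.lam j y ^ α j) i (B.lam i y ^ (α i + 1)) j := by rw [h]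
    _ = B.lam i y ^ (α i + 1) * ∏ j ∈ Finset.univ \ {i}, B.lam j y ^ α j :=
        Finset.prod_update_of_mem (Finset.mem_univ i) _ _
    _ = B.lam i y * (B.lam i y ^ α i * ∏ j ∈ Finset.univ.erase i, B.lam j y ^ α j) := by
        rw [Finset.sdiff_singleton_eq_erase, pow_succ]; ring
    _ = B.lam i y * ∏ j, B.lam j y ^ α j := by
        rw [← Finset.mul_prod_erase Finset.univ (fun j => B.lam j y ^ α j) (Finset.mem_univ i)]

/-- Affine polynomial representing `lam i`. -/
theorem isPoly_lam (i : Fin (n + 1)) :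
    ∃ p : MvPolynomial (Fin n) ℝ, p.totalDegree ≤ 1 ∧ ∀ y, MvPolynomial.eval y p = B.lam i y := by
  refine ⟨MvPolynomial.C (B.c i) + ∑ j,
    MvPolynomial.C (B.dlam i (fun m => if j = m then 1 else 0)) * MvPolynomial.X j, ?_, ?_⟩
  · refine le_trans (MvPolynomial.totalDegree_add _ _) (max_le ?_ ?_)
    · simp [MvPolynomial.totalDegree_C]
    · refine MvPolynomial.totalDegree_finsetSum_le fun j _ => ?_
      refine le_trans (MvPolynomial.totalDegree_mul _ _) ?_
      simp [MvPolynomial.totalDegree_C, MvPolynomial.totalDegree_X]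
  · intro y
    rw [map_add, MvPolynomial.eval_C, map_sum]
    have hd : B.dlam i y = ∑ j, y j • B.dlam i (fun m => if j = m then 1 else 0) :=
      LinearMap.pi_apply_eq_sum_univ (B.dlam i) y
    rw [lam, hd]
    rw [Finset.sum_congr rfl (fun j _ => by
      rw [map_mul, MvPolynomial.eval_C, MvPolynomial.eval_X])]
    rw [add_comm]
    congr 1
    exact Finset.sum_congr rfl fun j _ => by rw [smul_eq_mul, mul_comm]

theorem lamPow_mem {r : ℕ} (α : Fin (n + 1) → ℕ) (hα : (∑ i, α i) ≤ r) :
    B.lamPow α ∈ Pscalar n r := by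
  choose L hL1 hL2 using B.isPoly_lam
  refine ⟨∏ i, (L i) ^ (α i), ?_, ?_⟩
  · refine le_trans (MvPolynomial.totalDegree_finset_prod _ _) (le_trans ?_ hα)
    refine Finset.sum_le_sum fun i _ => ?_
    refine le_trans (MvPolynomial.totalDegree_pow _ _) ?_
    calc α i * (L i).totalDegree ≤ α i * 1 := Nat.mul_le_mul_left _ (hL1 i)
      _ = α i := mul_one _
  · intro y
    rw [map_prod]
    exact Finset.prod_congr rfl fun i _ => by rw [map_pow, hL2 i y]

/-- Graded span of barycentric monomials of degree at most `m`. -/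
def Mgr (m : ℕ) : Submodule ℝ ((Fin n → ℝ) → ℝ) :=
  Submodule.span ℝ {f | ∃ α : Fin (n + 1) → ℕ, (∑ i, α i) ≤ m ∧ f = B.lamPow α}

theorem coord_mul_mem (hn : 1 ≤ n) (m : ℕ) (i : Fin n) (f : (Fin n → ℝ) → ℝ)
    (hf : f ∈ B.Mgr m) : (fun y => y i * f y) ∈ B.Mgr (m + 1) := by
  induction hf using Submodule.span_induction with
  | mem g hg =>
    obtain ⟨α, hα, rfl⟩ := hg
    have hfun : (fun y => y i * B.lamPow α y)
        = B.x 0 i • B.lamPow α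
          + ∑ j, B.d j i • B.lamPow (Function.update α j.succ (α j.succ + 1)) := by
      funext y
      have hy : y i = B.x 0 i + ∑ j, B.lam j.succ y * B.d j i := by
        have h := congrFun (B.point_repr hn y) i
        rw [Pi.add_apply, Finset.sum_apply] at h
        simpa [smul_eq_mul] using h
      rw [Pi.add_apply, Pi.smul_apply, Finset.sum_apply, smul_eq_mul, hy, add_mul,
        Finset.sum_mul]
      congr 1
      refine Finset.sum_congr rfl fun j _ => ?_
      rw [Pi.smul_apply, smul_eq_mul, lamPow_update]
      ring
    rw [hfun]
    refine Submodule.add_mem _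
      (Submodule.smul_mem _ _ (Submodule.subset_span ⟨α, by omega, rfl⟩))
      (Submodule.sum_mem _ fun j _ => Submodule.smul_mem _ _
        (Submodule.subset_span ⟨_, by rw [sum_update_succ]; omega, rfl⟩))
  | zero =>
    have : (fun y : Fin n → ℝ => y i * (0 : (Fin n → ℝ) → ℝ) y) = 0 := by
      funext y; simp
    rw [this]; exact Submodule.zero_mem _
  | add g h _ _ ihg ihh =>
    have : (fun y => y i * (g + h) y) = (fun y => y i * g y) + fun y => y i * h y := by
      funext y; simp [mul_add]
    rw [this]; exact Submodule.add_mem _ ihg ihh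
  | smul a g _ ihg =>
    have : (fun y => y i * (a • g) y) = a • fun y => y i * g y := by
      funext y; simp [smul_eq_mul]; ring
    rw [this]; exact Submodule.smul_mem _ _ ihg

theorem mon_mem_Mgr (hn : 1 ≤ n) : ∀ (m : ℕ) (β : Fin n → ℕ), (∑ i, β i) = m →
    mon β ∈ B.Mgr m := by
  intro m
  induction m with
  | zero =>
    intro β hβ
    have hβ0 : ∀ i, β i = 0 := by
      intro i
      have h1 : β i ≤ ∑ j, β j :=
        Finset.single_le_sum (fun j _ => Nat.zero_le _) (Finset.mem_univ i)
      omega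
    have h1 : mon β = B.lamPow (fun _ => 0) := by
      funext y; simp [mon, lamPow, hβ0]
    rw [h1]
    exact Submodule.subset_span ⟨_, by simp, rfl⟩
  | succ m ih =>
    intro β hβ
    have hex : ∃ i, β i ≠ 0 := by
      by_contra h
      push_neg at h
      rw [Finset.sum_congr rfl (fun i _ => h i)] at hβ
      simp at hβ
    obtain ⟨i, hi⟩ := hex
    set β' := Function.update β i (β i - 1) with hβ'def
    have hββ' : β = Function.update β' i (β' i + 1) := by
      funext j
      by_cases hj : j = i
      · subst hj; simp [hβ'def]; omega
      · rw [hβ'def, Function.update_of_ne hj, Function.update_of_ne hj]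
    have hsum' : ∑ j, β' j = m := by
      have := sum_update_succ β' i
      rw [← hββ'] at this
      omega
    have hmon : mon β = fun y => y i * mon β' y := by
      funext y
      unfold mon
      rw [← Finset.mul_prod_erase Finset.univ (fun j => y j ^ β j) (Finset.mem_univ i),
        ← Finset.mul_prod_erase Finset.univ (fun j => y j ^ β' j) (Finset.mem_univ i)]
      have he : ∏ j ∈ Finset.univ.erase i, y j ^ β' j
          = ∏ j ∈ Finset.univ.erase i, y j ^ β j :=
        Finset.prod_congr rfl fun j hj => by
          rw [hβ'def, Function.update_of_ne (Finset.ne_of_mem_erase hj)]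
      rw [he]
      have hpow : y i ^ β i = y i * y i ^ β' i := by
        rw [hβ'def, Function.update_self]
        conv_lhs => rw [show β i = (β i - 1) + 1 by omega]
        rw [pow_succ]
        ring
      rw [hpow]
      ring
    rw [hmon]
    exact B.coord_mul_mem hn m i (mon β') (ih β' hsum')

theorem lamPow_mem_eqspan (hn : 1 ≤ n) (r : ℕ) : ∀ (m : ℕ) (α : Fin (n + 1) → ℕ),
    (∑ i, α i) + m = r →
    B.lamPow α ∈ Submodule.span ℝ
      {f | ∃ α : Fin (n + 1) → ℕ, (∑ i, α i) = r ∧ f = B.lamPow α} := by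
  intro m
  induction m with
  | zero => intro α hα; exact Submodule.subset_span ⟨α, by omega, rfl⟩
  | succ m ih =>
    intro α hα
    have hfun : B.lamPow α = ∑ i, B.lamPow (Function.update α i (α i + 1)) := by
      funext y
      rw [Finset.sum_apply, Finset.sum_congr rfl fun i _ => B.lamPow_update α i y,
        ← Finset.sum_mul, B.sum_lam hn y, one_mul]
    rw [hfun]
    exact Submodule.sum_mem _ fun i _ => ih _ (by rw [sum_update_succ]; omega)

/-- The main scalar result: barycentric monomials of degree exactly `r` span `P_r`. -/
theorem Pscalar_eq_span (hn : 1 ≤ n) (r : ℕ) :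
    Submodule.span ℝ {f | ∃ α : Fin (n + 1) → ℕ, (∑ i, α i) = r ∧ f = B.lamPow α}
      = Pscalar n r := by
  apply le_antisymm
  · rw [Submodule.span_le]
    rintro f ⟨α, hα, rfl⟩
    exact B.lamPow_mem α (le_of_eq hα)
  · refine le_trans (Pscalar_le_monspan n r) ?_
    rw [Submodule.span_le]
    rintro f ⟨β, hβ, rfl⟩
    have h1 : mon β ∈ B.Mgr (∑ i, β i) := B.mon_mem_Mgr hn _ β rfl
    have h2 : B.Mgr (∑ i, β i) ≤ B.Mgr r := Submodule.span_mono
      (fun g hg => by obtain ⟨α, hα, rfl⟩ := hg; exact ⟨α, by omega, rfl⟩)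
    have h3 : B.Mgr r ≤ Submodule.span ℝ
        {f | ∃ α : Fin (n + 1) → ℕ, (∑ i, α i) = r ∧ f = B.lamPow α} := by
      rw [Mgr, Submodule.span_le]
      rintro g ⟨α, hα, rfl⟩
      exact B.lamPow_mem_eqspan hn r (r - ∑ i, α i) α (by omega)
    exact h3 (h2 h1)

end Simplex
theorem span_top_of_fintype {V : Type*} [AddCommGroup V] [Module ℝ V] {ι : Type*} [Fintype ι]
    (N : Submodule ℝ V) (v : ι → N)
    (h : N ≤ Submodule.span ℝ (Set.range (fun i => (v i : V)))) :
    ⊤ ≤ Submodule.span ℝ (Set.range v) := by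
  intro x _
  obtain ⟨c, hc⟩ := (Submodule.mem_span_range_iff_exists_fun ℝ).mp (h x.2)
  refine (Submodule.mem_span_range_iff_exists_fun ℝ).mpr ⟨c, ?_⟩
  apply Subtype.ext
  rw [← hc]
  push_cast
  rfl

/-- Reindexing equivalence between multi-indices. -/
def consEquiv (n r : ℕ) :
    {β : Fin n → ℕ // (∑ i, β i) ≤ r} ≃ {α : Fin (n + 1) → ℕ // (∑ i, α i) = r} where
  toFun β := ⟨Fin.cons (r - ∑ i, β.1 i) β.1, by
    rw [Fin.sum_univ_succ]
    simp only [Fin.cons_zero, Fin.cons_succ]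
    have := β.2
    omega⟩
  invFun α := ⟨fun j => α.1 j.succ, by
    have h := α.2
    rw [Fin.sum_univ_succ] at h
    have hbeta : (∑ i : Fin n, (fun j => α.1 j.succ) i) = ∑ i : Fin n, α.1 i.succ :=
      Finset.sum_congr rfl (fun i _ => rfl)
    omega⟩
  left_inv β := Subtype.ext (by funext j; simp [Fin.cons_succ])
  right_inv α := Subtype.ext (by
    funext j
    refine Fin.cases ?_ ?_ j
    · simp only [Fin.cons_zero]
      have h := α.2
      rw [Fin.sum_univ_succ] at h
      have hbeta : (∑ i : Fin n, (fun j => α.1 j.succ) i) = ∑ i : Fin n, α.1 i.succ :=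
        Finset.sum_congr rfl (fun i _ => rfl)
      omega
    · intro m; simp [Fin.cons_succ])

namespace Simplex

variable {n : ℕ} (B : Simplex n)

theorem eqspan_set_eq_range (r : ℕ) :
    {f | ∃ α : Fin (n + 1) → ℕ, (∑ i, α i) = r ∧ f = B.lamPow α}
      = Set.range (fun α : {α : Fin (n + 1) → ℕ // (∑ i, α i) = r} => B.lamPow α.1) := by
  ext f
  constructor
  · rintro ⟨α, hα, rfl⟩; exact ⟨⟨α, hα⟩, rfl⟩
  · rintro ⟨α, rfl⟩; exact ⟨α.1, α.2, rfl⟩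

theorem lamPow_family_li (hn : 1 ≤ n) (r : ℕ) :
    LinearIndependent ℝ
      (fun α : {α : Fin (n + 1) → ℕ // (∑ i, α i) = r} => B.lamPow α.1) := by
  set P := Pscalar n r with hP
  set G : {β : Fin n → ℕ // (∑ i, β i) ≤ r} → P :=
    fun β => ⟨mon β.1, mon_mem β.1 β.2⟩ with hG
  have hmonli : LinearIndependent ℝ G := by
    apply LinearIndependent.of_comp P.subtype
    exact mon_li n r
  have hmonspan : ⊤ ≤ Submodule.span ℝ (Set.range G) := by
    apply span_top_of_fintype
    refine le_trans (Pscalar_le_monspan n r) (Submodule.span_mono ?_)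
    rintro f ⟨β, hβ, rfl⟩
    exact ⟨⟨β, hβ⟩, rfl⟩
  set basisMon : Module.Basis _ ℝ P := Module.Basis.mk hmonli hmonspan with hbm
  haveI : FiniteDimensional ℝ P := Module.Finite.of_basis basisMon
  have hfr : Module.finrank ℝ P = Fintype.card {β : Fin n → ℕ // (∑ i, β i) ≤ r} :=
    Module.finrank_eq_card_basis basisMon
  set F : {α : Fin (n + 1) → ℕ // (∑ i, α i) = r} → P :=
    fun α => ⟨B.lamPow α.1, B.lamPow_mem α.1 (le_of_eq α.2)⟩ with hF
  have hFspan : ⊤ ≤ Submodule.span ℝ (Set.range F) := by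
    apply span_top_of_fintype
    have hre : (Set.range fun α : {α : Fin (n + 1) → ℕ // (∑ i, α i) = r} =>
        ((F α : (Fin n → ℝ) → ℝ)))
        = {f | ∃ α : Fin (n + 1) → ℕ, (∑ i, α i) = r ∧ f = B.lamPow α} :=
      (B.eqspan_set_eq_range r).symm
    rw [hre, B.Pscalar_eq_span hn r]
  have hFli : LinearIndependent ℝ F :=
    linearIndependent_of_top_le_span_of_card_eq_finrank hFspan
      (by rw [hfr, Fintype.card_congr (consEquiv n r)])
  exact hFli.map' P.subtype (Submodule.ker_subtype P)

end Simplex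
/-- `{λ^α dλ_σ : |α| = r, σ increasing}` spans `P_r Λ^k`, and the subfamily with
`0 ∉ ⟦σ⟧` is a basis. -/
theorem stmt2 {n : ℕ} (hn : 1 ≤ n) (B : Simplex n) (r k : ℕ) (hr : 1 ≤ r) (hk : k ≤ n) :
    Submodule.span ℝ
        {ω | ∃ (α : Fin (n + 1) → ℕ) (σ : Fin k → Fin (n + 1)),
          (∑ i, α i) = r ∧ StrictMono σ ∧
          ω = fun y => B.lamPow α y • B.dlamWedge σ} = PLambda n r k
    ∧ LinearIndependent ℝ
        (fun q : {q : (Fin (n + 1) → ℕ) × (Fin k → Fin (n + 1)) //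
            (∑ i, q.1 i) = r ∧ StrictMono q.2 ∧ ∀ j, q.2 j ≠ 0} =>
          fun y => B.lamPow q.1.1 y • B.dlamWedge q.1.2)
    ∧ Submodule.span ℝ
        (Set.range (fun q : {q : (Fin (n + 1) → ℕ) × (Fin k → Fin (n + 1)) //
            (∑ i, q.1 i) = r ∧ StrictMono q.2 ∧ ∀ j, q.2 j ≠ 0} =>
          fun y => B.lamPow q.1.1 y • B.dlamWedge q.1.2)) = PLambda n r k := by
  -- notation
  set Q := {q : (Fin (n + 1) → ℕ) × (Fin k → Fin (n + 1)) //
      (∑ i, q.1 i) = r ∧ StrictMono q.2 ∧ ∀ j, q.2 j ≠ 0} with hQ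
  set famQ : Q → ((Fin n → ℝ) → ((Fin n → ℝ) [⋀^Fin k]→ₗ[ℝ] ℝ)) :=
    fun q => fun y => B.lamPow q.1.1 y • B.dlamWedge q.1.2 with hfamQ
  -- membership of generators
  have hmem : ∀ (α : Fin (n + 1) → ℕ) (σ : Fin k → Fin (n + 1)), (∑ i, α i) = r →
      (fun y => B.lamPow α y • B.dlamWedge σ) ∈ PLambda n r k := by
    intro α σ hα v
    have h1 : B.lamPow α ∈ Pscalar n r := B.lamPow_mem α (le_of_eq hα)
    have h2 := (Pscalar n r).smul_mem (B.dlamWedge σ v) h1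
    have h3 : (fun y => (B.lamPow α y • B.dlamWedge σ) v)
        = B.dlamWedge σ v • B.lamPow α := by
      funext y
      rw [AlternatingMap.smul_apply, Pi.smul_apply, smul_eq_mul, smul_eq_mul, mul_comm]
    rw [h3]
    exact h2
  -- main spanning: PLambda ≤ span (range famQ)
  have span_main : PLambda n r k ≤ Submodule.span ℝ (Set.range famQ) := by
    intro ω hω
    have hrep : ∀ s : {s : Fin k → Fin n // StrictMono s},
        ∃ c : {α : Fin (n + 1) → ℕ // (∑ i, α i) = r} → ℝ,
          (∑ α, c α • B.lamPow α.1) = fun y => ω y (fun j => B.d (s.1 j)) := by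
      intro s
      have h1 : (fun y => ω y (fun j => B.d (s.1 j))) ∈ Pscalar n r := hω _
      rw [← B.Pscalar_eq_span hn r, B.eqspan_set_eq_range r] at h1
      exact (Submodule.mem_span_range_iff_exists_fun ℝ).mp h1
    choose c hc using hrep
    have hωeq : ω = ∑ s : {s : Fin k → Fin n // StrictMono s},
        ∑ α : {α : Fin (n + 1) → ℕ // (∑ i, α i) = r},
          c s α • fun y => B.lamPow α.1 y • wedge (fun j => B.dlam ((s.1 j).succ)) := by
      funext y
      have h2 := B.alt_expansion hn (ω y)
      rw [Finset.sum_apply]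
      have h4 : ∀ s : {s : Fin k → Fin n // StrictMono s},
          (∑ α : {α : Fin (n + 1) → ℕ // (∑ i, α i) = r},
            c s α • fun y => B.lamPow α.1 y • wedge (fun j => B.dlam ((s.1 j).succ))) y
          = (ω y (fun j => B.d (s.1 j))) • wedge (fun j => B.dlam ((s.1 j).succ)) := by
        intro s
        rw [Finset.sum_apply]
        have h5 : ∀ α : {α : Fin (n + 1) → ℕ // (∑ i, α i) = r},
            (c s α • fun y => B.lamPow α.1 y • wedge (fun j => B.dlam ((s.1 j).succ))) y
            = (c s α * B.lamPow α.1 y) • wedge (fun j => B.dlam ((s.1 j).succ)) := by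
          intro α
          rw [Pi.smul_apply, smul_smul]
        rw [Finset.sum_congr rfl fun α _ => h5 α, ← Finset.sum_smul]
        congr 1
        have h6 := congrFun (hc s) y
        rw [Finset.sum_apply] at h6
        rw [← h6]
        exact Finset.sum_congr rfl fun α _ => by rw [Pi.smul_apply, smul_eq_mul]
      rw [Finset.sum_congr rfl fun s _ => h4 s]
      exact h2
    rw [hωeq]
    refine Submodule.sum_mem _ fun s _ => Submodule.sum_mem _ fun α _ =>
      Submodule.smul_mem _ _ (Submodule.subset_span ?_)
    exact ⟨⟨(α.1, fun j => (s.1 j).succ), α.2,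
      fun a b hab => Fin.succ_lt_succ_iff.mpr (s.2 hab), fun j => Fin.succ_ne_zero _⟩, rfl⟩
  -- Fintype instance for Q
  haveI : Fintype Q := Fintype.ofInjective
    (fun q : Q => ((⟨q.1.1, q.2.1⟩ : {α : Fin (n + 1) → ℕ // (∑ i, α i) = r}), q.1.2))
    (by
      rintro a b hab
      have h1 := congrArg (fun z : {α : Fin (n + 1) → ℕ // (∑ i, α i) = r}
          × (Fin k → Fin (n + 1)) => (z.1.1, z.2)) hab
      apply Subtype.ext
      exact Prod.ext (congrArg Prod.fst h1) (congrArg Prod.snd h1))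
  refine ⟨?_, ?_, ?_⟩
  · -- statement 1
    apply le_antisymm
    · rw [Submodule.span_le]
      rintro ω ⟨α, σ, hα, hσ, rfl⟩
      exact hmem α σ hα
    · refine le_trans span_main (Submodule.span_mono ?_)
      rintro ω ⟨q, rfl⟩
      exact ⟨q.1.1, q.1.2, q.2.1, q.2.2.1, rfl⟩
  · -- independence
    rw [Fintype.linearIndependent_iff]
    intro c hc q0
    set s : Fin k → Fin n := fun j => (q0.1.2 j).pred (q0.2.2.2 j) with hsdef
    have hσs : q0.1.2 = fun j => (s j).succ := funext fun j => (Fin.succ_pred _ _).symm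
    have hs : StrictMono s := by
      intro a b hab
      have := q0.2.2.1 hab
      exact Fin.pred_lt_pred_iff.mpr this
    set ι : {α : Fin (n + 1) → ℕ // (∑ i, α i) = r} → Q :=
      fun α => ⟨(α.1, q0.1.2), α.2, q0.2.2.1, q0.2.2.2⟩ with hι
    have hkey : ∀ y : Fin n → ℝ,
        ∑ q : Q, (if q.1.2 = q0.1.2 then c q * B.lamPow q.1.1 y else 0) = 0 := by
      intro y
      have h1 := congrFun hc y
      rw [Finset.sum_apply] at h1
      have h2 := congrArg
        (fun η : (Fin n → ℝ) [⋀^Fin k]→ₗ[ℝ] ℝ => η (fun j => B.d (s j))) h1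
      simp only [Pi.zero_apply, AlternatingMap.zero_apply] at h2
      rw [alt_sum_apply] at h2
      have h3 : ∀ q : Q,
          ((c q • famQ q) y) (fun j => B.d (s j))
          = (if q.1.2 = q0.1.2 then c q * B.lamPow q.1.1 y else 0) := by
        intro q
        rw [hfamQ, Pi.smul_apply, AlternatingMap.smul_apply, AlternatingMap.smul_apply,
          B.dlamWedge_eval q.1.2 q.2.2.1 q.2.2.2 s hs, ← hσs]
        by_cases hq : q.1.2 = q0.1.2
        · rw [if_pos hq, if_pos hq, smul_eq_mul, smul_eq_mul, mul_one]
        · rw [if_neg hq, if_neg hq, smul_eq_mul, smul_eq_mul, mul_zero, mul_zero]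
      rw [Finset.sum_congr rfl fun q _ => h3 q] at h2
      exact h2
    have hkey2 : ∀ y : Fin n → ℝ,
        ∑ α : {α : Fin (n + 1) → ℕ // (∑ i, α i) = r}, c (ι α) * B.lamPow α.1 y = 0 := by
      intro y
      rw [← hkey y]
      rw [← Finset.sum_filter]
      symm
      refine Finset.sum_bij'
        (fun (q : Q) (_ : q ∈ Finset.univ.filter fun q : Q => q.1.2 = q0.1.2) =>
          (⟨q.1.1, q.2.1⟩ : {α : Fin (n + 1) → ℕ // (∑ i, α i) = r}))
        (fun α _ => ι α) (fun q _ => Finset.mem_univ _)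
        (fun α _ => Finset.mem_filter.mpr ⟨Finset.mem_univ _, rfl⟩)
        ?_ ?_ ?_
      · intro q hq
        have hcond : q.1.2 = q0.1.2 := (Finset.mem_filter.mp hq).2
        apply Subtype.ext
        exact Prod.ext rfl hcond.symm
      · intro α _
        apply Subtype.ext
        rfl
      · intro q hq
        have hcond : q.1.2 = q0.1.2 := (Finset.mem_filter.mp hq).2
        have : ι ⟨q.1.1, q.2.1⟩ = q := by
          apply Subtype.ext
          exact Prod.ext rfl hcond.symm
        rw [this]
    have hli := Fintype.linearIndependent_iff.mp (B.lamPow_family_li hn r)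
      (fun α => c (ι α))
      (by
        funext y
        rw [Finset.sum_apply]
        have := hkey2 y
        simpa [smul_eq_mul] using this)
    have hq0 : ι ⟨q0.1.1, q0.2.1⟩ = q0 := by
      apply Subtype.ext
      rfl
    rw [← hq0]
    exact hli ⟨q0.1.1, q0.2.1⟩
  · -- statement 3
    apply le_antisymm
    · rw [Submodule.span_le]
      rintro ω ⟨q, rfl⟩
      exact hmem q.1.1 q.1.2 q.2.1
    · exact span_main
end
end

section
/- Let r ≥ 1 and 0 ≤ k ≤ n. The set {λ^α dλ_σ : α ∈ ℕ^{n+1}, |α| = r, σ : {1,…,k} → {0,…,n} increasing, ⟦α,σ⟧ = {0,…,n}} spans P̊_rΛ^k, and the family {λ^α dλ_σ : α ∈ ℕ^{n+1}, |α| = r, σ : {1,…,k} → {0,…,n} increasing, ⟦α,σ⟧ = {0,…,n}, α_i = 0 for every i < min({0,…,n} ∖ ⟦σ⟧)} is a basis of P̊_rΛ^k. -/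
open scoped BigOperators

noncomputable section

namespace StmtAux
open Finset

variable {n : ℕ} (B : Simplex n)

lemma dlam_sub (i j l : Fin (n+1)) :
    B.dlam i (B.x j - B.x l) = (if i = j then (1:ℝ) else 0) - if i = l then 1 else 0 := by
  have h1 := B.lam_vertex i j
  have h2 := B.lam_vertex i l
  rw [map_sub]; linarith

lemma linIndep (l : Fin (n+1)) :
    LinearIndependent ℝ (fun i : {j : Fin (n+1) // j ≠ l} => B.x i - B.x l) := by
  have := (affineIndependent_iff_linearIndependent_vsub ℝ B.x l).mp B.affineIndep
  simpa [vsub_eq_sub] using this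

/-- The basis `x_i - x_l`, `i ≠ l`. -/
def sbasis (hn : 1 ≤ n) (l : Fin (n+1)) :
    Module.Basis {j : Fin (n+1) // j ≠ l} ℝ (Fin n → ℝ) := by
  haveI : Nontrivial (Fin (n+1)) := by
    refine ⟨⟨0, 1, fun h => ?_⟩⟩
    have h2 := congrArg Fin.val h
    simp [Fin.val_one'] at h2
    omega
  haveI hne : Nonempty {j : Fin (n+1) // j ≠ l} := by
    rcases exists_ne l with ⟨j, hj⟩
    exact ⟨⟨j, hj⟩⟩
  exact basisOfLinearIndependentOfCardEqFinrank (linIndep B l)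
    (by simp [Fintype.card_subtype_compl, Module.finrank_fin_fun])

lemma sbasis_apply (hn : 1 ≤ n) (l : Fin (n+1)) (i : {j : Fin (n+1) // j ≠ l}) :
    sbasis B hn l i = B.x i - B.x l := by
  simp [sbasis, coe_basisOfLinearIndependentOfCardEqFinrank]

lemma sum_dlam (hn : 1 ≤ n) : (∑ i, B.dlam i) = 0 := by
  refine (sbasis B hn 0).ext fun i => ?_
  rw [sbasis_apply]
  simp only [LinearMap.coe_sum, Finset.sum_apply, LinearMap.zero_apply]
  rw [Finset.sum_congr rfl (fun j _ => dlam_sub B j i 0)]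
  rcases i with ⟨i, hi⟩
  simp [Finset.sum_sub_distrib]

lemma sum_c (hn : 1 ≤ n) : (∑ i, B.c i) = 1 := by
  have h := fun i => B.lam_vertex i 0
  have heq : (∑ i, (B.dlam i (B.x 0) + B.c i)) = ∑ i, if i = (0 : Fin (n+1)) then (1:ℝ) else 0 :=
    Finset.sum_congr rfl fun i _ => h i
  rw [Finset.sum_add_distrib] at heq
  have hz : (∑ i, B.dlam i (B.x 0)) = 0 := by
    have := congrArg (fun f : (Fin n → ℝ) →ₗ[ℝ] ℝ => f (B.x 0)) (sum_dlam B hn)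
    simpa using this
  rw [hz, zero_add] at heq
  simpa using heq

lemma sum_lam (hn : 1 ≤ n) (y : Fin n → ℝ) : (∑ i, B.lam i y) = 1 := by
  have hz : (∑ i, B.dlam i y) = 0 := by
    have := congrArg (fun f : (Fin n → ℝ) →ₗ[ℝ] ℝ => f y) (sum_dlam B hn)
    simpa using this
  simp only [Simplex.lam, Finset.sum_add_distrib, hz, zero_add]
  exact sum_c B hn

/-- `λ_j (∑ t_i x_i) = t_j` for affine combinations. -/
lemma lam_combo (t : Fin (n+1) → ℝ) (ht : ∑ i, t i = 1) (j : Fin (n+1)) :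
    B.lam j (∑ i, t i • B.x i) = t j := by
  have h1 : B.dlam j (∑ i, t i • B.x i) = ∑ i, t i * B.dlam j (B.x i) := by
    rw [map_sum]; simp [map_smul, smul_eq_mul]
  have h2 : ∀ i, B.dlam j (B.x i) = (if j = i then (1:ℝ) else 0) - B.c j := by
    intro i; have := B.lam_vertex j i; linarith
  simp only [Simplex.lam, h1]
  rw [Finset.sum_congr rfl fun i _ => by rw [h2 i]]
  have h3 : ∑ i, t i * ((if j = i then (1:ℝ) else 0) - B.c j)
      = (∑ i, t i * (if j = i then (1:ℝ) else 0)) - (∑ i, t i) * B.c j := by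
    rw [Finset.sum_mul, ← Finset.sum_sub_distrib]
    exact Finset.sum_congr rfl fun i _ => by ring
  rw [h3, ht]
  have h4 : ∑ i, t i * (if j = i then (1:ℝ) else 0) = t j := by
    rw [Finset.sum_eq_single j]
    · simp
    · intro i _ hij; simp [Ne.symm hij]
    · simp
  rw [h4]; ring

/-- A vector killed by all `dλ_j`, `j ≠ l`, is zero. -/
lemma eq_zero_of_dlam (hn : 1 ≤ n) (l : Fin (n+1)) (u : Fin n → ℝ)
    (h : ∀ j, j ≠ l → B.dlam j u = 0) : u = 0 := by
  have hrep := (sbasis B hn l).sum_repr u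
  have hco : ∀ j : {j : Fin (n+1) // j ≠ l}, (sbasis B hn l).repr u j = B.dlam j u := by
    intro j
    conv_rhs => rw [← hrep]
    rw [map_sum]
    rw [Finset.sum_congr rfl (fun i _ => by
      rw [map_smul, sbasis_apply, dlam_sub] )]
    rcases j with ⟨j, hj⟩
    rw [Finset.sum_eq_single ⟨j, hj⟩]
    · simp [hj]
    · rintro ⟨i, hi⟩ _ hij
      have hji : j ≠ i := fun h => hij (by simp [h])
      simp [hji, hi, hj]
    · simp
  rw [← hrep]
  apply Finset.sum_eq_zero
  intro j _
  rw [hco j, h j j.2, zero_smul]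

/-- `y = ∑ λ_i(y) x_i`. -/
lemma combo_eq (hn : 1 ≤ n) (y : Fin n → ℝ) : (∑ i, B.lam i y • B.x i) = y := by
  have key : ∀ j : Fin (n+1), B.dlam j ((∑ i, B.lam i y • B.x i) - y) = 0 := by
    intro j
    rw [map_sub, map_sum]
    have h2 : ∀ i, B.dlam j (B.x i) = (if j = i then (1:ℝ) else 0) - B.c j := by
      intro i; have := B.lam_vertex j i; linarith
    rw [Finset.sum_congr rfl fun i _ => by rw [map_smul, smul_eq_mul, h2 i]]
    have h3 : ∑ i, B.lam i y * ((if j = i then (1:ℝ) else 0) - B.c j)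
        = (∑ i, B.lam i y * (if j = i then (1:ℝ) else 0)) - (∑ i, B.lam i y) * B.c j := by
      rw [Finset.sum_mul, ← Finset.sum_sub_distrib]
      exact Finset.sum_congr rfl fun i _ => by ring
    rw [h3, sum_lam B hn]
    have h4 : ∑ i, B.lam i y * (if j = i then (1:ℝ) else 0) = B.lam j y := by
      rw [Finset.sum_eq_single j]
      · simp
      · intro i _ hij; simp [Ne.symm hij]
      · simp
    rw [h4]
    simp [Simplex.lam]
  exact sub_eq_zero.mp (eq_zero_of_dlam B hn 0 _ (fun j _ => key j))

end StmtAux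
namespace StmtAux
open Finset MvPolynomial

variable {n : ℕ} (B : Simplex n)

/-- Multi-indices of total degree `r`. -/
def Aset (n r : ℕ) : Finset (Fin (n+1) → ℕ) :=
  (Fintype.piFinset fun _ => Finset.range (r+1)).filter fun α => ∑ i, α i = r

lemma mem_Aset {r : ℕ} {α : Fin (n+1) → ℕ} : α ∈ Aset n r ↔ ∑ i, α i = r := by
  constructor
  · intro h; exact (Finset.mem_filter.mp h).2
  · intro h
    refine Finset.mem_filter.mpr ⟨Fintype.mem_piFinset.mpr fun i => ?_, h⟩
    rw [Finset.mem_range]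
    have : α i ≤ ∑ j, α j := Finset.single_le_sum (fun _ _ => Nat.zero_le _) (Finset.mem_univ i)
    omega

lemma isPolyDeg_mono {a b : ℕ} {f : (Fin n → ℝ) → ℝ} (hab : a ≤ b) (h : IsPolyDeg a f) :
    IsPolyDeg b f := by
  obtain ⟨p, hp, he⟩ := h
  exact ⟨p, le_trans hp (by exact_mod_cast hab), he⟩

lemma isPolyDeg_mul {a b : ℕ} {f g : (Fin n → ℝ) → ℝ} (hf : IsPolyDeg a f) (hg : IsPolyDeg b g) :
    IsPolyDeg (a + b) (fun y => f y * g y) := by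
  obtain ⟨p, hp, hpe⟩ := hf
  obtain ⟨q, hq, hqe⟩ := hg
  refine ⟨p * q, le_trans (MvPolynomial.totalDegree_mul p q) (add_le_add hp hq), fun y => ?_⟩
  simp [hpe y, hqe y]

lemma isPolyDeg_one : IsPolyDeg (n := n) 0 (fun _ => 1) := ⟨1, by simp, fun y => by simp⟩

lemma single_eq_smul (y : Fin n → ℝ) (j : Fin n) :
    (Pi.single j (y j) : Fin n → ℝ) = y j • (Pi.single j 1 : Fin n → ℝ) := by
  funext t
  by_cases h : t = j <;> simp [Pi.single_apply, h]

lemma isPolyDeg_lam (i : Fin (n+1)) : IsPolyDeg 1 (B.lam i) := by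
  refine ⟨(∑ j : Fin n, MvPolynomial.C (B.dlam i (Pi.single j 1)) * MvPolynomial.X j)
    + MvPolynomial.C (B.c i), ?_, ?_⟩
  · refine le_trans (totalDegree_add _ _) (max_le ?_ (by simp))
    refine le_trans (totalDegree_finset_sum _ _) (Finset.sup_le fun j _ => ?_)
    refine le_trans (totalDegree_mul _ _) ?_
    simp [totalDegree_X]
  · intro y
    have hy : B.dlam i y = ∑ j, B.dlam i (Pi.single j 1) * y j := by
      conv_lhs => rw [show y = ∑ j, Pi.single j (y j) from (Finset.univ_sum_single y).symm]
      rw [map_sum]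
      refine Finset.sum_congr rfl fun j _ => ?_
      rw [single_eq_smul, map_smul]
      simp [mul_comm]
    simp [Simplex.lam, hy]

lemma isPolyDeg_prod (α : Fin (n+1) → ℕ) (s : Finset (Fin (n+1))) :
    IsPolyDeg (∑ i ∈ s, α i) (fun y => ∏ i ∈ s, B.lam i y ^ α i) := by
  classical
  induction s using Finset.induction with
  | empty => simpa using isPolyDeg_one
  | @insert a s ha ih =>
    rw [Finset.sum_insert ha]
    have hpow : IsPolyDeg (α a) (fun y => B.lam a y ^ α a) := by
      induction (α a) with
      | zero => simpa using isPolyDeg_one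
      | succ m ihm =>
        have := isPolyDeg_mul ihm (isPolyDeg_lam B a)
        refine ⟨this.choose, this.choose_spec.1, fun y => ?_⟩
        rw [this.choose_spec.2 y]
        simp [pow_succ]
    have := isPolyDeg_mul hpow ih
    refine ⟨this.choose, this.choose_spec.1, fun y => ?_⟩
    rw [this.choose_spec.2 y]
    simp [Finset.prod_insert ha]

lemma isPolyDeg_lamPow (α : Fin (n+1) → ℕ) : IsPolyDeg (∑ i, α i) (B.lamPow α) :=
  isPolyDeg_prod B α Finset.univ

/-- Restricted Bernstein independence (L1). -/
theorem bern_indep (hn : 1 ≤ n) (r : ℕ) (S : Finset (Fin (n+1))) (hS : S.Nonempty)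
    (c : (Fin (n+1) → ℕ) → ℝ)
    (h : ∀ y : Fin n → ℝ, (∀ i ∉ S, B.lam i y = 0) →
      ∑ α ∈ Aset n r, c α * B.lamPow α y = 0) :
    ∀ α₀ ∈ Aset n r, (∀ i ∉ S, α₀ i = 0) → c α₀ = 0 := by
  classical
  intro α₀ hα₀ hsupp
  set toF : (Fin (n+1) → ℕ) → (Fin (n+1) →₀ ℕ) :=
    fun α => Finsupp.equivFunOnFinite.symm α with htoF
  have toF_inj : Function.Injective toF := Equiv.injective _
  set P : MvPolynomial (Fin (n+1)) ℝ :=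
    ∑ α ∈ Aset n r, MvPolynomial.monomial (toF α) (c α) with hP
  have evalP : ∀ t : Fin (n+1) → ℝ, eval t P = ∑ α ∈ Aset n r, c α * ∏ i, t i ^ α i := by
    intro t
    rw [hP, map_sum]
    refine Finset.sum_congr rfl fun α _ => ?_
    rw [eval_monomial]
    congr 1
    rw [Finsupp.prod_fintype]
    · rfl
    · intro i; simp
  have key0 : ∀ t : Fin (n+1) → ℝ, (∀ i ∉ S, t i = 0) → (∑ i, t i) = 1 → eval t P = 0 := by
    intro t htS ht1
    rw [evalP]
    set y := ∑ i, t i • B.x i with hy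
    have hlam : ∀ j, B.lam j y = t j := fun j => lam_combo B t ht1 j
    have hface : ∀ i ∉ S, B.lam i y = 0 := fun i hi => by rw [hlam]; exact htS i hi
    have := h y hface
    rw [← this]
    refine Finset.sum_congr rfl fun α _ => ?_
    congr 1
    rw [Simplex.lamPow]
    exact Finset.prod_congr rfl fun i _ => by rw [hlam]
  have scale : ∀ (s : ℝ) (t : Fin (n+1) → ℝ), eval (s • t) P = s ^ r * eval t P := by
    intro s t
    rw [evalP, evalP, Finset.mul_sum]
    refine Finset.sum_congr rfl fun α hα => ?_
    have hαr : ∑ i, α i = r := mem_Aset.mp hα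
    have : ∏ i, (s * t i) ^ α i = s ^ r * ∏ i, t i ^ α i := by
      rw [← hαr]
      rw [← Finset.prod_pow_eq_pow_sum]
      rw [← Finset.prod_mul_distrib]
      exact Finset.prod_congr rfl fun i _ => by rw [mul_pow]
    simp only [Pi.smul_apply, smul_eq_mul, this]
    ring
  set G : MvPolynomial (Fin (n+1)) ℝ := (∑ i ∈ S, MvPolynomial.X i) * P with hG
  have key1 : ∀ u : Fin (n+1) → ℝ, (∀ i ∉ S, u i = 0) → eval u G = 0 := by
    intro u huS
    rw [hG, map_mul]
    have hsum : eval u (∑ i ∈ S, MvPolynomial.X i) = ∑ i ∈ S, u i := by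
      rw [map_sum]; exact Finset.sum_congr rfl fun i _ => by simp
    set s := ∑ i ∈ S, u i with hs
    have hstot : ∑ i, u i = s := by
      rw [hs]
      exact (Finset.sum_subset (Finset.subset_univ S) fun i _ hi => huS i hi).symm
    by_cases hz0 : s = 0
    · rw [hsum, hz0, zero_mul]
    · have ht : eval (s⁻¹ • u) P = 0 := by
        refine key0 _ (fun i hi => by simp [huS i hi]) ?_
        simp only [Pi.smul_apply, smul_eq_mul, ← Finset.mul_sum]
        rw [hstot]
        exact inv_mul_cancel₀ hz0
      have : eval u P = 0 := by
        have hu : u = s • (s⁻¹ • u) := by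
          rw [smul_smul, mul_inv_cancel₀ hz0, one_smul]
        rw [hu, scale, ht, mul_zero]
      rw [this, mul_zero]
  set z : Fin (n+1) → MvPolynomial (Fin (n+1)) ℝ :=
    fun i => if i ∈ S then MvPolynomial.X i else 0 with hz
  have hHzero : MvPolynomial.bind₁ z G = 0 := by
    apply MvPolynomial.funext
    intro v
    rw [map_zero]
    have : eval v (MvPolynomial.bind₁ z G) = eval (fun i => if i ∈ S then v i else 0) G := by
      have haev : (MvPolynomial.aeval v) (MvPolynomial.bind₁ z G)
          = (MvPolynomial.aeval fun i => (MvPolynomial.aeval v) (z i)) G :=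
        MvPolynomial.aeval_bind₁ v z G
      have h1 : (MvPolynomial.aeval v) (MvPolynomial.bind₁ z G)
          = eval v (MvPolynomial.bind₁ z G) := rfl
      have h2 : (fun i => (MvPolynomial.aeval v) (z i))
          = fun i => if i ∈ S then v i else 0 := by
        funext i
        rw [hz]
        by_cases hi : i ∈ S <;> simp [hi]
      rw [← h1, haev, h2]
      rfl
    rw [this]
    exact key1 _ (fun i hi => by simp [hi])
  have hfac : MvPolynomial.bind₁ z G
      = (∑ i ∈ S, MvPolynomial.X i) * MvPolynomial.bind₁ z P := by
    rw [hG, map_mul]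
    congr 1
    rw [map_sum]
    refine Finset.sum_congr rfl fun i hi => ?_
    rw [MvPolynomial.bind₁_X_right, hz]
    simp [hi]
  have hXne : (∑ i ∈ S, MvPolynomial.X i : MvPolynomial (Fin (n+1)) ℝ) ≠ 0 := by
    intro heq
    have h1 := congrArg (eval fun _ => (1:ℝ)) heq
    rw [map_sum, map_zero] at h1
    simp only [eval_X] at h1
    rw [Finset.sum_const] at h1
    have h2 : (S.card : ℝ) = 0 := by simpa using h1
    have h3 : S.card = 0 := by exact_mod_cast h2
    exact hS.ne_empty (Finset.card_eq_zero.mp h3)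
  have hPzero : MvPolynomial.bind₁ z P = 0 := by
    rcases mul_eq_zero.mp (hfac ▸ hHzero) with h' | h'
    · exact absurd h' hXne
    · exact h'
  have hbind : MvPolynomial.bind₁ z P
      = ∑ α ∈ Aset n r, (if (∀ i ∉ S, α i = 0) then
          MvPolynomial.monomial (toF α) (c α) else 0) := by
    rw [hP, map_sum]
    refine Finset.sum_congr rfl fun α _ => ?_
    rw [MvPolynomial.bind₁_monomial]
    by_cases hαS : ∀ i ∉ S, α i = 0
    · rw [if_pos hαS, MvPolynomial.monomial_eq]
      congr 1
      rw [Finsupp.prod]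
      refine Finset.prod_congr rfl fun i hi => ?_
      have hiS : i ∈ S := by
        by_contra hiS
        have := hαS i hiS
        have hmem := Finsupp.mem_support_iff.mp hi
        exact hmem (by simpa [htoF] using this)
      rw [hz]; simp [hiS]
    · rw [if_neg hαS]
      push_neg at hαS
      obtain ⟨i₀, hi₀S, hi₀⟩ := hαS
      apply mul_eq_zero_of_right
      refine Finset.prod_eq_zero (i := i₀) ?_ ?_
      · rw [Finsupp.mem_support_iff]
        simpa [htoF] using hi₀
      · rw [hz]
        simp only [if_neg hi₀S]
        exact zero_pow (by simpa [htoF] using hi₀)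
  have := congrArg (MvPolynomial.coeff (toF α₀)) (hbind ▸ hPzero)
  rw [MvPolynomial.coeff_zero] at this
  rw [MvPolynomial.coeff_sum] at this
  rw [Finset.sum_eq_single α₀] at this
  · rw [if_pos hsupp, MvPolynomial.coeff_monomial, if_pos rfl] at this
    exact this
  · intro α hα hne
    have : toF α ≠ toF α₀ := fun he => hne (toF_inj he)
    by_cases hc : ∀ i ∉ S, α i = 0
    · rw [if_pos hc, MvPolynomial.coeff_monomial, if_neg this]
    · rw [if_neg hc, MvPolynomial.coeff_zero]
  · intro hα₀'
    exact absurd hα₀ hα₀'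

end StmtAux
namespace StmtAux
open Finset MvPolynomial

variable {n : ℕ} (B : Simplex n)

/-- Span of the Bernstein monomials of degree `d`. -/
def Sp (d : ℕ) : Submodule ℝ ((Fin n → ℝ) → ℝ) :=
  Submodule.span ℝ {g | ∃ α : Fin (n+1) → ℕ, (∑ i, α i) = d ∧ g = B.lamPow α}

/-- An affine combination of the `λ_i`. -/
def T (t : Fin (n+1) → ℝ) : (Fin n → ℝ) → ℝ := fun y => ∑ i, t i * B.lam i y

lemma lamPow_mul_lam (α : Fin (n+1) → ℕ) (i : Fin (n+1)) (y : Fin n → ℝ) :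
    B.lamPow (Function.update α i (α i + 1)) y = B.lamPow α y * B.lam i y := by
  rw [Simplex.lamPow, Simplex.lamPow]
  rw [← Finset.mul_prod_erase Finset.univ _ (Finset.mem_univ i)]
  rw [← Finset.mul_prod_erase Finset.univ (fun j => B.lam j y ^ α j) (Finset.mem_univ i)]
  rw [Function.update_self]
  have : ∀ j ∈ Finset.univ.erase i, B.lam j y ^ (Function.update α i (α i + 1) j)
      = B.lam j y ^ α j := by
    intro j hj
    rw [Function.update_of_ne (Finset.mem_erase.mp hj).1]
  rw [Finset.prod_congr rfl this, pow_succ]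
  ring

lemma sum_split {ι : Type*} [Fintype ι] [DecidableEq ι] (α : ι → ℕ) (i : ι) :
    (∑ j, α j) = α i + ∑ j ∈ Finset.univ.erase i, α j :=
  (Finset.add_sum_erase Finset.univ (fun j => α j) (Finset.mem_univ i)).symm

lemma sum_update_succ (α : Fin (n+1) → ℕ) (i : Fin (n+1)) :
    (∑ j, Function.update α i (α i + 1) j) = (∑ j, α j) + 1 := by
  rw [sum_split (Function.update α i (α i + 1)) i, sum_split α i, Function.update_self]
  have h3 : ∀ j ∈ Finset.univ.erase i, Function.update α i (α i + 1) j = α j := by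
    intro j hj
    rw [Function.update_of_ne (Finset.mem_erase.mp hj).1]
  have h4 : (∑ j ∈ Finset.univ.erase i, Function.update α i (α i + 1) j)
      = ∑ j ∈ Finset.univ.erase i, α j := Finset.sum_congr rfl h3
  rw [h4]
  omega

lemma span_mul {d : ℕ} (t : Fin (n+1) → ℝ) {f : (Fin n → ℝ) → ℝ} (hf : f ∈ Sp B d) :
    (fun y => f y * T B t y) ∈ Sp B (d+1) := by
  induction hf using Submodule.span_induction with
  | mem g hg =>
    obtain ⟨α, hα, rfl⟩ := hg
    have heq : (fun y => B.lamPow α y * T B t y)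
        = ∑ i, t i • B.lamPow (Function.update α i (α i + 1)) := by
      funext y
      rw [T, Finset.mul_sum]
      simp only [Finset.sum_apply, Pi.smul_apply, smul_eq_mul]
      refine Finset.sum_congr rfl fun i _ => ?_
      rw [lamPow_mul_lam]
      ring
    rw [heq]
    refine Submodule.sum_mem _ fun i _ => Submodule.smul_mem _ _ ?_
    exact Submodule.subset_span ⟨_, by rw [sum_update_succ, hα], rfl⟩
  | zero =>
    have : (fun y => (0 : (Fin n → ℝ) → ℝ) y * T B t y) = 0 := by funext y; simp
    rw [this]; exact Submodule.zero_mem _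
  | add g₁ g₂ _ _ ih₁ ih₂ =>
    have : (fun y => (g₁ + g₂) y * T B t y)
        = (fun y => g₁ y * T B t y) + fun y => g₂ y * T B t y := by
      funext y; simp [add_mul]
    rw [this]; exact Submodule.add_mem _ ih₁ ih₂
  | smul a g _ ih =>
    have : (fun y => (a • g) y * T B t y) = a • fun y => g y * T B t y := by
      funext y; simp [mul_assoc]
    rw [this]; exact Submodule.smul_mem _ _ ih

lemma Sp_succ (hn : 1 ≤ n) {d : ℕ} {f : (Fin n → ℝ) → ℝ} (hf : f ∈ Sp B d) :
    f ∈ Sp B (d+1) := by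
  have := span_mul B (fun _ => 1) hf
  have heq : (fun y => f y * T B (fun _ => 1) y) = f := by
    funext y
    rw [T]
    simp only [one_mul]
    rw [sum_lam B hn, mul_one]
  rwa [heq] at this

lemma Sp_mono (hn : 1 ≤ n) {d d' : ℕ} (h : d ≤ d') : Sp B d ≤ Sp B d' := by
  induction d', h using Nat.le_induction with
  | base => exact le_rfl
  | succ m hm ih => exact le_trans ih (fun f hf => Sp_succ B hn hf)

lemma one_mem_Sp : (fun _ : Fin n → ℝ => (1:ℝ)) ∈ Sp B 0 :=
  Submodule.subset_span ⟨0, by simp, by funext y; simp [Simplex.lamPow]⟩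

lemma mon_mem (hn : 1 ≤ n) : ∀ (N : ℕ) (d : Fin n → ℕ), (∑ j, d j) = N →
    (fun y : Fin n → ℝ => ∏ j, y j ^ d j) ∈ Sp B N := by
  intro N
  induction N with
  | zero =>
    intro d hd
    have hz : ∀ j, d j = 0 := by
      intro j
      have := Finset.sum_eq_zero_iff.mp hd
      exact this j (Finset.mem_univ j)
    have : (fun y : Fin n → ℝ => ∏ j, y j ^ d j) = fun _ => 1 := by
      funext y; simp [hz]
    rw [this]; exact one_mem_Sp B
  | succ N ih =>
    intro d hd
    have hex : ∃ j₀, d j₀ ≠ 0 := by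
      by_contra hno
      push_neg at hno
      rw [Finset.sum_congr rfl fun j _ => hno j] at hd
      simp at hd
    obtain ⟨j₀, hj₀⟩ := hex
    set d' := Function.update d j₀ (d j₀ - 1) with hd'
    have hsum' : (∑ j, d' j) = N := by
      rw [hd']
      rw [sum_split (Function.update d j₀ (d j₀ - 1)) j₀, Function.update_self]
      rw [sum_split d j₀] at hd
      have he : ∀ j ∈ Finset.univ.erase j₀, Function.update d j₀ (d j₀ - 1) j = d j := by
        intro j hj; rw [Function.update_of_ne (Finset.mem_erase.mp hj).1]
      have he' : (∑ j ∈ Finset.univ.erase j₀, Function.update d j₀ (d j₀ - 1) j)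
          = ∑ j ∈ Finset.univ.erase j₀, d j := Finset.sum_congr rfl he
      rw [he']
      omega
    have ihm := ih d' hsum'
    have key := span_mul B (fun i => B.x i j₀) ihm
    have heq : (fun y => (∏ j, y j ^ d' j) * T B (fun i => B.x i j₀) y)
        = fun y : Fin n → ℝ => ∏ j, y j ^ d j := by
      funext y
      have hT : T B (fun i => B.x i j₀) y = y j₀ := by
        rw [T]
        have := congrFun (combo_eq B hn y) j₀
        rw [← this]
        simp [Finset.sum_apply, mul_comm]
      rw [hT]
      have he : ∀ j ∈ Finset.univ.erase j₀, y j ^ d' j = y j ^ d j := by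
        intro j hj; rw [hd', Function.update_of_ne (Finset.mem_erase.mp hj).1]
      have hsplit : (∏ j, y j ^ d j) = y j₀ ^ d j₀ * ∏ j ∈ Finset.univ.erase j₀, y j ^ d j :=
        (Finset.mul_prod_erase Finset.univ (fun j => y j ^ d j) (Finset.mem_univ j₀)).symm
      have hsplit' : (∏ j, y j ^ d' j)
          = y j₀ ^ (d j₀ - 1) * ∏ j ∈ Finset.univ.erase j₀, y j ^ d j := by
        rw [← Finset.mul_prod_erase Finset.univ (fun j => y j ^ d' j) (Finset.mem_univ j₀)]
        rw [Finset.prod_congr rfl he, hd', Function.update_self]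
      rw [hsplit, hsplit']
      have hpow : y j₀ ^ d j₀ = y j₀ ^ (d j₀ - 1) * y j₀ := by
        conv_lhs => rw [show d j₀ = (d j₀ - 1) + 1 by omega]
        rw [pow_succ]
      rw [hpow]
      ring
    rw [heq] at key
    exact key

/-- Bernstein spanning (L2). -/
theorem poly_mem (hn : 1 ≤ n) {r : ℕ} {f : (Fin n → ℝ) → ℝ} (hf : IsPolyDeg r f) :
    f ∈ Sp B r := by
  obtain ⟨p, hdeg, he⟩ := hf
  have heq : f = ∑ dd ∈ p.support, MvPolynomial.coeff dd p
      • fun y : Fin n → ℝ => ∏ i, y i ^ dd i := by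
    funext y
    rw [← he y, MvPolynomial.eval_eq']
    simp [Finset.sum_apply]
  rw [heq]
  refine Submodule.sum_mem _ fun dd hdd => Submodule.smul_mem _ _ ?_
  have hle : (∑ i, dd i) ≤ r := by
    have h1 := MvPolynomial.le_totalDegree hdd
    have h2 : (dd.sum fun _ e => e) = ∑ i, dd i := by
      rw [Finsupp.sum_fintype]
      intro i; rfl
    calc (∑ i, dd i) = dd.sum fun _ e => e := h2.symm
      _ ≤ p.totalDegree := h1
      _ ≤ r := hdeg
  exact Sp_mono B hn hle (mon_mem B hn _ dd rfl)

lemma poly_mem_range (hn : 1 ≤ n) {r : ℕ} {f : (Fin n → ℝ) → ℝ} (hf : IsPolyDeg r f) :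
    f ∈ Submodule.span ℝ (Set.range fun α : (Aset n r : Finset (Fin (n+1) → ℕ)) =>
      B.lamPow α) := by
  have h1 := poly_mem B hn hf
  have hset : {g | ∃ α : Fin (n+1) → ℕ, (∑ i, α i) = r ∧ g = B.lamPow α}
      = Set.range fun α : (Aset n r : Finset (Fin (n+1) → ℕ)) => B.lamPow α := by
    ext g
    constructor
    · rintro ⟨α, hα, rfl⟩
      exact ⟨⟨α, mem_Aset.mpr hα⟩, rfl⟩
    · rintro ⟨⟨α, hα⟩, rfl⟩
      exact ⟨α, mem_Aset.mp hα, rfl⟩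
  rw [Sp, hset] at h1
  exact h1

end StmtAux
namespace StmtAux
open Finset

variable {n k : ℕ} (B : Simplex n)

/-- Strictly monotone `k`-tuples avoiding `l`. -/
def SMset (n k : ℕ) (l : Fin (n+1)) : Finset (Fin k → Fin (n+1)) :=
  @Finset.filter _ (fun τ => StrictMono τ ∧ ∀ t, τ t ≠ l) (Classical.decPred _) Finset.univ

lemma mem_SMset {l : Fin (n+1)} {τ : Fin k → Fin (n+1)} :
    τ ∈ SMset n k l ↔ StrictMono τ ∧ ∀ t, τ t ≠ l := by
  rw [SMset]
  rw [@Finset.mem_filter _ _ (Classical.decPred _)]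
  simp

lemma wedge_apply (f : Fin k → ((Fin n → ℝ) →ₗ[ℝ] ℝ)) (v : Fin k → (Fin n → ℝ)) :
    wedge f v = Matrix.det (Matrix.of fun s t => f t (v s)) := rfl

lemma strictMono_eq_of_range {τ ρ : Fin k → Fin (n+1)} (hτ : StrictMono τ) (hρ : StrictMono ρ)
    (hsub : ∀ t, τ t ∈ Finset.image ρ Finset.univ) : τ = ρ := by
  have hcard : (Finset.image ρ Finset.univ).card = k := by
    rw [Finset.card_image_of_injective _ hρ.injective, Finset.card_univ, Fintype.card_fin]
  have h1 := Finset.orderEmbOfFin_unique hcard hsub hτ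
  have h2 := Finset.orderEmbOfFin_unique hcard
    (fun t => Finset.mem_image_of_mem ρ (Finset.mem_univ t)) hρ
  exact h1.trans h2.symm

lemma det_delta {τ ρ : Fin k → Fin (n+1)} (hτ : StrictMono τ) (hρ : StrictMono ρ) :
    Matrix.det (Matrix.of fun s t => if τ t = ρ s then (1:ℝ) else 0)
      = if τ = ρ then 1 else 0 := by
  by_cases heq : τ = ρ
  · subst heq
    rw [if_pos rfl]
    have : (Matrix.of fun s t => if τ t = τ s then (1:ℝ) else 0)
        = (1 : Matrix (Fin k) (Fin k) ℝ) := by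
      ext s t
      simp only [Matrix.of_apply, Matrix.one_apply, hτ.injective.eq_iff]
      by_cases h : s = t <;> simp [h, eq_comm]
    rw [this, Matrix.det_one]
  · rw [if_neg heq]
    by_cases hsub : ∀ t, τ t ∈ Finset.image ρ Finset.univ
    · exact absurd (strictMono_eq_of_range hτ hρ hsub) heq
    · push_neg at hsub
      obtain ⟨t₀, ht₀⟩ := hsub
      refine Matrix.det_eq_zero_of_column_eq_zero t₀ fun s => ?_
      simp only [Matrix.of_apply]
      rw [if_neg]
      intro hc
      exact ht₀ (hc ▸ Finset.mem_image_of_mem ρ (Finset.mem_univ s))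

lemma dlamWedge_dual {l : Fin (n+1)} {τ ρ : Fin k → Fin (n+1)} (hτ : StrictMono τ)
    (hρ : StrictMono ρ) (hτl : ∀ t, τ t ≠ l) :
    B.dlamWedge τ (fun s => B.x (ρ s) - B.x l) = if τ = ρ then 1 else 0 := by
  rw [Simplex.dlamWedge, wedge_apply]
  rw [show (Matrix.of fun s t => B.dlam (τ t) (B.x (ρ s) - B.x l))
      = Matrix.of fun s t => if τ t = ρ s then (1:ℝ) else 0 from ?_]
  · exact det_delta hτ hρ
  · ext s t
    simp only [Matrix.of_apply]
    rw [dlam_sub]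
    rw [if_neg (hτl t)]
    ring
lemma altSum_apply {ι : Type*} (s : Finset ι) (f : ι → ((Fin n → ℝ) [⋀^Fin k]→ₗ[ℝ] ℝ))
    (v : Fin k → (Fin n → ℝ)) : (∑ i ∈ s, f i) v = ∑ i ∈ s, f i v := by
  classical
  induction s using Finset.induction with
  | empty => simp
  | @insert a s ha ih => rw [Finset.sum_insert ha, Finset.sum_insert ha,
      AlternatingMap.add_apply, ih]

lemma perm_tuple_eq {M : Type*} [AddCommGroup M] [Module ℝ M]
    (g : (Fin n → ℝ) [⋀^Fin k]→ₗ[ℝ] M) (w : Fin k → (Fin n → ℝ)) (e : Equiv.Perm (Fin k)) :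
    g w = Equiv.Perm.sign e • g (w ∘ e) := by
  classical
  rw [AlternatingMap.map_perm]
  rw [smul_smul]
  rw [Int.units_mul_self, one_smul]

/-- Expansion of an alternating form in the `dλ_τ`, `τ` avoiding `l`. -/
lemma alt_expand (hn : 1 ≤ n) (l : Fin (n+1)) (η : (Fin n → ℝ) [⋀^Fin k]→ₗ[ℝ] ℝ) :
    η = ∑ τ ∈ SMset n k l, η (fun s => B.x (τ s) - B.x l) • B.dlamWedge τ := by
  classical
  refine Module.Basis.ext_alternating (sbasis B hn l) fun v hv => ?_
  set e := Tuple.sort v with he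
  have hmono : Monotone (v ∘ e) := Tuple.monotone_sort v
  have hinj : Function.Injective (v ∘ e) := hv.comp e.injective
  have hsm : StrictMono (v ∘ e) := hmono.strictMono_of_injective hinj
  set τ : Fin k → Fin (n+1) := fun s => ((v (e s)) : Fin (n+1)) with hτdef
  have hτ : StrictMono τ := by
    intro a b hab
    exact Subtype.coe_lt_coe.mpr (hsm hab)
  have hτl : ∀ t, τ t ≠ l := fun t => (v (e t)).2
  have hτmem : τ ∈ SMset n k l := mem_SMset.mpr ⟨hτ, hτl⟩
  set w : Fin k → (Fin n → ℝ) := fun i => sbasis B hn l (v i) with hw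
  have hwτ : w ∘ e = fun s => B.x (τ s) - B.x l := by
    funext s
    show sbasis B hn l (v (e s)) = B.x (τ s) - B.x l
    rw [sbasis_apply]
  have lhs_eq : η w = Equiv.Perm.sign e • η (fun s => B.x (τ s) - B.x l) := by
    rw [perm_tuple_eq η w e, hwτ]
  have rhs_eq : (∑ τ' ∈ SMset n k l, η (fun s => B.x (τ' s) - B.x l) • B.dlamWedge τ') w
      = Equiv.Perm.sign e •
        (∑ τ' ∈ SMset n k l, η (fun s => B.x (τ' s) - B.x l) • B.dlamWedge τ')
          (fun s => B.x (τ s) - B.x l) := by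
    rw [perm_tuple_eq _ w e, hwτ]
  rw [lhs_eq, rhs_eq]
  congr 1
  have hval : ∀ τ' ∈ SMset n k l,
      (η (fun s => B.x (τ' s) - B.x l) • B.dlamWedge τ') (fun s => B.x (τ s) - B.x l)
        = if τ' = τ then η (fun s => B.x (τ s) - B.x l) else 0 := by
    intro τ' hτ'
    obtain ⟨hτ'sm, hτ'l⟩ := mem_SMset.mp hτ'
    rw [AlternatingMap.smul_apply]
    rw [dlamWedge_dual B hτ'sm hτ hτ'l]
    by_cases h : τ' = τ
    · subst h; simp
    · simp [h]
  rw [altSum_apply]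
  rw [Finset.sum_congr rfl hval]
  rw [Finset.sum_ite_eq' (SMset n k l) τ]
  rw [if_pos hτmem]
end StmtAux
namespace StmtAux
open Finset

variable {n k : ℕ} (B : Simplex n)

lemma not_mem_rangeF {σ : Fin k → Fin (n+1)} {j : Fin (n+1)} :
    j ∉ rangeF σ ↔ ∀ t, σ t ≠ j := by
  rw [rangeF]
  simp [eq_comm]

lemma mem_suppF {α : Fin (n+1) → ℕ} {i : Fin (n+1)} : i ∈ suppF α ↔ α i ≠ 0 := by
  rw [suppF]; simp

/-- Every generator `λ^α dλ_σ` with full support lies in `P̊_r Λ^k`. -/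
lemma gen_mem (hn : 1 ≤ n) {r : ℕ} (α : Fin (n+1) → ℕ) (σ : Fin k → Fin (n+1))
    (hα : (∑ i, α i) = r) (hfull : suppF α ∪ rangeF σ = Finset.univ) :
    (fun y => B.lamPow α y • B.dlamWedge σ) ∈ PLambdaZero B r k := by
  constructor
  · -- polynomial part
    intro v
    have h1 : IsPolyDeg r (B.lamPow α) := hα ▸ isPolyDeg_lamPow B α
    obtain ⟨p, hp, he⟩ := h1
    refine ⟨p * MvPolynomial.C (B.dlamWedge σ v), ?_, fun y => ?_⟩
    · refine le_trans (MvPolynomial.totalDegree_mul _ _) ?_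
      simp [hp]
    · rw [map_mul, he y]
      simp [AlternatingMap.smul_apply, smul_eq_mul]
  · -- trace part
    intro S hS y hy v hv
    have hcompl : Sᶜ.card = 1 := by
      rw [Finset.card_compl, hS]
      simp
    obtain ⟨m, hm⟩ := Finset.card_eq_one.mp hcompl
    have hmem : ∀ i : Fin (n+1), i ∉ S ↔ i = m := by
      intro i
      rw [← Finset.mem_compl, hm, Finset.mem_singleton]
    have hmS : m ∉ S := (hmem m).mpr rfl
    have hmfull : m ∈ suppF α ∪ rangeF σ := hfull ▸ Finset.mem_univ m
    rcases Finset.mem_union.mp hmfull with hsupp | hrange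
    · have hlam0 : B.lam m y = 0 := hy m hmS
      have hpow0 : B.lamPow α y = 0 := by
        rw [Simplex.lamPow]
        refine Finset.prod_eq_zero (Finset.mem_univ m) ?_
        rw [hlam0]
        exact zero_pow (mem_suppF.mp hsupp)
      rw [AlternatingMap.smul_apply, hpow0, zero_smul]
    · obtain ⟨t₀, _, ht₀⟩ := Finset.mem_image.mp hrange
      rw [AlternatingMap.smul_apply]
      rw [Simplex.dlamWedge, wedge_apply]
      rw [Matrix.det_eq_zero_of_column_eq_zero t₀ fun s => ?_]
      · exact smul_zero _
      · simp only [Matrix.of_apply]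
        rw [ht₀]
        exact hv s m hmS

lemma mstar_not_mem {α : Fin (n+1) → ℕ} {σ : Fin k → Fin (n+1)}
    (hfull : suppF α ∪ rangeF σ = Finset.univ)
    (hmin : ∀ i, (∀ j, j ≤ i → j ∈ rangeF σ) → α i = 0)
    (hne : (suppF α).Nonempty) : (suppF α).min' hne ∉ rangeF σ := by
  set m := (suppF α).min' hne with hm
  have hαm : α m ≠ 0 := mem_suppF.mp ((suppF α).min'_mem hne)
  have hnotall : ¬(∀ j, j ≤ m → j ∈ rangeF σ) := fun hall => hαm (hmin m hall)
  push_neg at hnotall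
  obtain ⟨j, hjm, hjτ⟩ := hnotall
  have hjsupp : j ∈ suppF α := by
    have := hfull ▸ Finset.mem_univ j
    rcases Finset.mem_union.mp this with h | h
    · exact h
    · exact absurd h hjτ
  have : m ≤ j := (suppF α).min'_le j hjsupp
  have : j = m := le_antisymm hjm this
  rwa [← this]

lemma supp_nonempty {r : ℕ} (hr : 1 ≤ r) {α : Fin (n+1) → ℕ} (hα : (∑ i, α i) = r) :
    (suppF α).Nonempty := by
  by_contra hcon
  rw [Finset.not_nonempty_iff_eq_empty] at hcon
  have : ∀ i, α i = 0 := by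
    intro i
    by_contra hi
    have : i ∈ suppF α := mem_suppF.mpr hi
    rw [hcon] at this
    exact absurd this (Finset.notMem_empty i)
  rw [Finset.sum_congr rfl fun i _ => this i] at hα
  simp at hα
  omega

/-- Linear independence of the basis family. -/
theorem indepF (hn : 1 ≤ n) (r : ℕ) (hr : 1 ≤ r) :
    LinearIndependent ℝ
      (fun q : {q : (Fin (n + 1) → ℕ) × (Fin k → Fin (n + 1)) //
          (∑ i, q.1 i) = r ∧ StrictMono q.2 ∧ suppF q.1 ∪ rangeF q.2 = Finset.univ ∧
          ∀ i, (∀ j, j ≤ i → j ∈ rangeF q.2) → q.1 i = 0} =>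
        fun y => B.lamPow q.1.1 y • B.dlamWedge q.1.2) := by
  classical
  rw [linearIndependent_iff']
  intro s g hsum q₀ hq₀
  have hne₀ : (suppF q₀.1.1).Nonempty := supp_nonempty hr q₀.2.1
  set mst := (suppF q₀.1.1).min' hne₀ with hmst
  set v : Fin k → (Fin n → ℝ) := fun t => B.x (q₀.1.2 t) - B.x mst with hv
  have heval : ∀ y : Fin n → ℝ,
      ∑ q ∈ s, g q * (B.lamPow q.1.1 y * B.dlamWedge q.1.2 v) = 0 := by
    intro y
    have h1 := congrFun hsum y
    have h2 : (∑ q ∈ s, g q • fun y => B.lamPow q.1.1 y • B.dlamWedge q.1.2) y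
        = ∑ q ∈ s, g q • (B.lamPow q.1.1 y • B.dlamWedge q.1.2) := by
      rw [Finset.sum_apply]
      rfl
    rw [h2] at h1
    have h3 := congrArg (fun η : (Fin n → ℝ) [⋀^Fin k]→ₗ[ℝ] ℝ => η v) h1
    simp only [Pi.zero_apply, AlternatingMap.zero_apply] at h3
    rw [show ((∑ q ∈ s, g q • (B.lamPow q.1.1 y • B.dlamWedge q.1.2)) : _) v
        = ∑ q ∈ s, (g q • (B.lamPow q.1.1 y • B.dlamWedge q.1.2)) v from by
      rw [← altSum_apply]] at h3
    rw [← h3]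
    refine Finset.sum_congr rfl fun q _ => ?_
    simp [AlternatingMap.smul_apply, smul_eq_mul]
  set c : (Fin (n+1) → ℕ) → ℝ :=
    fun α => ∑ q ∈ s.filter (fun q => q.1.1 = α), g q * B.dlamWedge q.1.2 v with hc
  have hrw : ∀ y : Fin n → ℝ,
      ∑ α ∈ Aset n r, c α * B.lamPow α y
        = ∑ q ∈ s, g q * (B.lamPow q.1.1 y * B.dlamWedge q.1.2 v) := by
    intro y
    rw [← Finset.sum_fiberwise_of_maps_to (g := fun q => q.1.1)
      (fun q _ => mem_Aset.mpr q.2.1)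
      (fun q => g q * (B.lamPow q.1.1 y * B.dlamWedge q.1.2 v))]
    refine Finset.sum_congr rfl fun α _ => ?_
    rw [hc, Finset.sum_mul]
    refine Finset.sum_congr rfl fun q hq => ?_
    have : q.1.1 = α := (Finset.mem_filter.mp hq).2
    rw [this]
    ring
  have hcz : c q₀.1.1 = 0 := by
    refine bern_indep B hn r Finset.univ ⟨0, Finset.mem_univ 0⟩ c
      (fun y _ => by rw [hrw]; exact heval y) q₀.1.1 (mem_Aset.mpr q₀.2.1)
      (fun i hi => absurd (Finset.mem_univ i) hi)
  have hcz2 : (∑ q ∈ s.filter (fun q => q.1.1 = q₀.1.1), g q * B.dlamWedge q.1.2 v) = 0 := hcz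
  have hterm : ∀ q ∈ s.filter (fun q => q.1.1 = q₀.1.1),
      g q * B.dlamWedge q.1.2 v = if q.1.2 = q₀.1.2 then g q else 0 := by
    intro q hq
    obtain ⟨hqs, hqα⟩ := Finset.mem_filter.mp hq
    have hqne : (suppF q.1.1).Nonempty := supp_nonempty hr q.2.1
    have hmq : (suppF q.1.1).min' hqne ∉ rangeF q.1.2 :=
      mstar_not_mem q.2.2.2.1 q.2.2.2.2 hqne
    have hmeq : (suppF q.1.1).min' hqne = mst := by
      rw [hmst]
      congr 1
      rw [hqα]
    have havoid : ∀ t, q.1.2 t ≠ mst := by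
      rw [← hmeq]
      exact fun t => not_mem_rangeF.mp hmq t
    rw [hv]
    rw [dlamWedge_dual B q.2.2.1 q₀.2.2.1 havoid]
    by_cases h : q.1.2 = q₀.1.2 <;> simp [h]
  rw [Finset.sum_congr rfl hterm] at hcz2
  have hq₀f : q₀ ∈ s.filter (fun q => q.1.1 = q₀.1.1) :=
    Finset.mem_filter.mpr ⟨hq₀, rfl⟩
  rw [Finset.sum_eq_single q₀] at hcz2
  · rwa [if_pos rfl] at hcz2
  · intro q hq hne
    rw [if_neg]
    intro hσ
    exact hne (Subtype.ext (Prod.ext (Finset.mem_filter.mp hq).2 hσ))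
  · intro hcon
    exact absurd hq₀f hcon

end StmtAux
namespace StmtAux
open Finset

variable {n k : ℕ} (B : Simplex n)

/-- Spanning: every form in `P̊_r Λ^k` lies in the span of the basis family. -/
theorem spanF (hn : 1 ≤ n) (r : ℕ) (hr : 1 ≤ r)
    {ω : (Fin n → ℝ) → ((Fin n → ℝ) [⋀^Fin k]→ₗ[ℝ] ℝ)}
    (hω : ω ∈ PLambdaZero B r k) :
    ω ∈ Submodule.span ℝ
      (Set.range (fun q : {q : (Fin (n + 1) → ℕ) × (Fin k → Fin (n + 1)) //
          (∑ i, q.1 i) = r ∧ StrictMono q.2 ∧ suppF q.1 ∪ rangeF q.2 = Finset.univ ∧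
          ∀ i, (∀ j, j ≤ i → j ∈ rangeF q.2) → q.1 i = 0} =>
        fun y => B.lamPow q.1.1 y • B.dlamWedge q.1.2)) := by
  classical
  obtain ⟨hpoly, htrace⟩ := hω
  -- Step A: Bernstein–alternating decomposition
  have hch : ∀ τ : Fin k → Fin (n+1), ∃ c : {x // x ∈ Aset n r} → ℝ,
      (∑ α : {x // x ∈ Aset n r}, c α • B.lamPow ↑α)
        = fun y => ω y (fun s => B.x (τ s) - B.x 0) := by
    intro τ
    exact (Submodule.mem_span_range_iff_exists_fun ℝ).mp
      (poly_mem_range B hn (hpoly fun s => B.x (τ s) - B.x 0))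
  choose cc hcc using hch
  set η : (Fin (n+1) → ℕ) → ((Fin n → ℝ) [⋀^Fin k]→ₗ[ℝ] ℝ) :=
    fun α => if h : α ∈ Aset n r then
      ∑ τ ∈ SMset n k 0, cc τ ⟨α, h⟩ • B.dlamWedge τ else 0 with hη
  have hdecomp : ∀ y, ω y = ∑ α ∈ Aset n r, B.lamPow α y • η α := by
    intro y
    conv_lhs => rw [alt_expand B hn 0 (ω y)]
    have hg : ∀ τ : Fin k → Fin (n+1), ω y (fun s => B.x (τ s) - B.x 0)
        = ∑ α : {x // x ∈ Aset n r}, cc τ α * B.lamPow (↑α) y := by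
      intro τ
      have h1 := congrFun (hcc τ) y
      rw [← h1, Finset.sum_apply]
      exact Finset.sum_congr rfl fun α _ => rfl
    rw [Finset.sum_congr rfl (fun τ _ => by rw [hg τ])]
    rw [Finset.sum_congr rfl (fun τ _ => Finset.sum_smul)]
    rw [Finset.sum_comm]
    conv_rhs => rw [← Finset.sum_attach (Aset n r) (fun α => B.lamPow α y • η α)]
    rw [← Finset.univ_eq_attach]
    refine Finset.sum_congr rfl fun α _ => ?_
    rw [hη]
    simp only [dif_pos α.2]
    have : (⟨(α : Fin (n+1) → ℕ), α.2⟩ : {x // x ∈ Aset n r}) = α := rfl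
    rw [this, Finset.smul_sum]
    refine Finset.sum_congr rfl fun τ _ => ?_
    rw [smul_smul, mul_comm]
  -- Step B: trace conditions kill bad coefficients
  have hkill : ∀ (α : Fin (n+1) → ℕ), α ∈ Aset n r → ∀ m : Fin (n+1), α m = 0 →
      ∀ v : Fin k → (Fin n → ℝ), (∀ s, B.dlam m (v s) = 0) → η α v = 0 := by
    intro α hα m hm v hv
    set S := ({m} : Finset (Fin (n+1)))ᶜ with hSdef
    have hScard : S.card = n := by
      rw [hSdef, Finset.card_compl]
      simp
    have hSne : S.Nonempty := Finset.card_pos.mp (by rw [hScard]; omega)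
    have hmm : ∀ i : Fin (n+1), i ∉ S ↔ i = m := by
      intro i
      rw [hSdef]
      simp
    refine bern_indep B hn r S hSne (fun α' => η α' v) ?_ α hα
      (fun i hi => by rw [(hmm i).mp hi]; exact hm)
    intro y hy
    have hωy : ω y v = 0 := by
      refine htrace S hScard y hy v fun j => ?_
      intro i hiS
      rw [(hmm i).mp hiS]
      exact hv j
    rw [hdecomp y, altSum_apply] at hωy
    rw [← hωy]
    refine Finset.sum_congr rfl fun α' _ => ?_
    rw [AlternatingMap.smul_apply, smul_eq_mul, mul_comm]
  -- Step C: each piece lies in the span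
  have hpiece : ∀ α ∈ Aset n r,
      (fun y => B.lamPow α y • η α) ∈ Submodule.span ℝ
        (Set.range (fun q : {q : (Fin (n + 1) → ℕ) × (Fin k → Fin (n + 1)) //
            (∑ i, q.1 i) = r ∧ StrictMono q.2 ∧ suppF q.1 ∪ rangeF q.2 = Finset.univ ∧
            ∀ i, (∀ j, j ≤ i → j ∈ rangeF q.2) → q.1 i = 0} =>
          fun y => B.lamPow q.1.1 y • B.dlamWedge q.1.2)) := by
    intro α hα
    have hsne : (suppF α).Nonempty := supp_nonempty hr (mem_Aset.mp hα)
    set mst := (suppF α).min' hsne with hmst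
    have hmst_supp : α mst ≠ 0 := mem_suppF.mp ((suppF α).min'_mem hsne)
    have hexp := alt_expand B hn mst (η α)
    have hfun : (fun y => B.lamPow α y • η α)
        = ∑ τ ∈ SMset n k mst,
            (η α fun s => B.x (τ s) - B.x mst) • fun y => B.lamPow α y • B.dlamWedge τ := by
      funext y
      rw [Finset.sum_apply]
      conv_lhs => rw [hexp]
      rw [Finset.smul_sum]
      refine Finset.sum_congr rfl fun τ _ => ?_
      rw [Pi.smul_apply, smul_smul, smul_smul, mul_comm]
    rw [hfun]
    refine Submodule.sum_mem _ fun τ hτ => ?_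
    obtain ⟨hτsm, hτl⟩ := mem_SMset.mp hτ
    by_cases he : (η α fun s => B.x (τ s) - B.x mst) = 0
    · rw [he, zero_smul]
      exact Submodule.zero_mem _
    · refine Submodule.smul_mem _ _ (Submodule.subset_span ?_)
      have hfull : suppF α ∪ rangeF τ = Finset.univ := by
        apply Finset.eq_univ_of_forall
        intro j
        by_contra hj
        rw [Finset.mem_union] at hj
        push_neg at hj
        obtain ⟨hjs, hjr⟩ := hj
        have hjm : j ≠ mst := by
          intro hjm
          exact hjs (hjm ▸ (suppF α).min'_mem hsne)
        refine he (hkill α hα j (by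
          by_contra hc
          exact hjs (mem_suppF.mpr hc)) _ fun s => ?_)
        rw [dlam_sub]
        rw [if_neg, if_neg]
        · ring
        · exact fun hc => hjm hc
        · exact fun hc => (not_mem_rangeF.mp hjr s) hc.symm
      have hmin : ∀ i, (∀ j, j ≤ i → j ∈ rangeF τ) → α i = 0 := by
        intro i hall
        have hmstτ : mst ∉ rangeF τ := not_mem_rangeF.mpr fun t => hτl t
        have hilt : i < mst := by
          by_contra hge
          push_neg at hge
          exact hmstτ (hall mst hge)
        by_contra hc
        have : mst ≤ i := (suppF α).min'_le i (mem_suppF.mpr hc)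
        omega
      exact ⟨⟨(α, τ), mem_Aset.mp hα, hτsm, hfull, hmin⟩, rfl⟩
  have hfinal : ω = ∑ α ∈ Aset n r, fun y => B.lamPow α y • η α := by
    funext y
    rw [hdecomp y, Finset.sum_apply]
  rw [hfinal]
  exact Submodule.sum_mem _ fun α hα => hpiece α hα

end StmtAux
/-- `{λ^α dλ_σ : |α| = r, σ increasing, ⟦α,σ⟧ = {0,…,n}}` spans `P̊_r Λ^k`, and
the subfamily with `α_i = 0` for every `i < min ({0,…,n} \ ⟦σ⟧)` (equivalently: `α_i = 0`
whenever every `j ≤ i` belongs to `⟦σ⟧`) is a basis. -/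
theorem stmt6 {n : ℕ} (hn : 1 ≤ n) (B : Simplex n) (r k : ℕ) (hr : 1 ≤ r) (hk : k ≤ n) :
    Submodule.span ℝ
        {ω | ∃ (α : Fin (n + 1) → ℕ) (σ : Fin k → Fin (n + 1)),
          (∑ i, α i) = r ∧ StrictMono σ ∧ suppF α ∪ rangeF σ = Finset.univ ∧
          ω = fun y => B.lamPow α y • B.dlamWedge σ} = PLambdaZero B r k
    ∧ LinearIndependent ℝ
        (fun q : {q : (Fin (n + 1) → ℕ) × (Fin k → Fin (n + 1)) //
            (∑ i, q.1 i) = r ∧ StrictMono q.2 ∧ suppF q.1 ∪ rangeF q.2 = Finset.univ ∧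
            ∀ i, (∀ j, j ≤ i → j ∈ rangeF q.2) → q.1 i = 0} =>
          fun y => B.lamPow q.1.1 y • B.dlamWedge q.1.2)
    ∧ Submodule.span ℝ
        (Set.range (fun q : {q : (Fin (n + 1) → ℕ) × (Fin k → Fin (n + 1)) //
            (∑ i, q.1 i) = r ∧ StrictMono q.2 ∧ suppF q.1 ∪ rangeF q.2 = Finset.univ ∧
            ∀ i, (∀ j, j ≤ i → j ∈ rangeF q.2) → q.1 i = 0} =>
          fun y => B.lamPow q.1.1 y • B.dlamWedge q.1.2)) = PLambdaZero B r k := by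
  have hFle : Submodule.span ℝ
      (Set.range (fun q : {q : (Fin (n + 1) → ℕ) × (Fin k → Fin (n + 1)) //
          (∑ i, q.1 i) = r ∧ StrictMono q.2 ∧ suppF q.1 ∪ rangeF q.2 = Finset.univ ∧
          ∀ i, (∀ j, j ≤ i → j ∈ rangeF q.2) → q.1 i = 0} =>
        fun y => B.lamPow q.1.1 y • B.dlamWedge q.1.2)) ≤ PLambdaZero B r k := by
    rw [Submodule.span_le]
    rintro _ ⟨q, rfl⟩
    exact StmtAux.gen_mem B hn q.1.1 q.1.2 q.2.1 q.2.2.2.1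
  have hFge : PLambdaZero B r k ≤ Submodule.span ℝ
      (Set.range (fun q : {q : (Fin (n + 1) → ℕ) × (Fin k → Fin (n + 1)) //
          (∑ i, q.1 i) = r ∧ StrictMono q.2 ∧ suppF q.1 ∪ rangeF q.2 = Finset.univ ∧
          ∀ i, (∀ j, j ≤ i → j ∈ rangeF q.2) → q.1 i = 0} =>
        fun y => B.lamPow q.1.1 y • B.dlamWedge q.1.2)) :=
    fun ω hω => StmtAux.spanF B hn r hr hω
  have hFeq := le_antisymm hFle hFge
  refine ⟨?_, StmtAux.indepF B hn r hr, hFeq⟩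
  refine le_antisymm ?_ ?_
  · rw [Submodule.span_le]
    rintro ω ⟨α, σ, h1, h2, h3, rfl⟩
    exact StmtAux.gen_mem B hn α σ h1 h3
  · refine le_trans hFge (Submodule.span_mono ?_)
    rintro _ ⟨q, rfl⟩
    exact ⟨q.1.1, q.1.2, q.2.1, q.2.2.1, q.2.2.2.1, rfl⟩
end
end

section
/- Let r ≥ 1, 0 ≤ k ≤ n, and let S ⊆ {0,…,n} be nonempty. Let real coefficients c_{α,σ} be given, indexed by the pairs (α, σ) with α ∈ ℕ^{n+1}, |α| = r−1, σ : {0,…,k} → {0,…,n} increasing, and ⟦α,σ⟧ ⊆ S. If the k-form Σ c_{α,σ} λ^α φ_σ has vanishing trace on the face f_S (i.e., Σ c_{α,σ} λ^α(x) φ_σ(x)(v_1,…,v_k) = 0 whenever λ_i(x) = 0 for all i ∉ S and v_1,…,v_k ∈ T_S), then Σ c_{α,σ} λ^α φ_σ = 0 identically on ℝⁿ. (This expresses that the barycentric extension operator, sending the trace on f_S of λ^α φ_σ to the global form λ^α φ_σ, is well defined on P⁻_rΛ^k(f_S).) -/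
open scoped BigOperators

noncomputable section

section Aux

namespace Simplex

variable {n : ℕ} (B : Simplex n)

lemma altSum_apply {ι : Type*} (s : Finset ι) {k : ℕ}
    (f : ι → ((Fin n → ℝ) [⋀^Fin k]→ₗ[ℝ] ℝ)) (v : Fin k → Fin n → ℝ) :
    (∑ i ∈ s, f i) v = ∑ i ∈ s, f i v := by
  classical
  induction s using Finset.cons_induction with
  | empty => simp
  | cons a s ha ih => simp [Finset.sum_insert ha, ih]

lemma lam_def (i : Fin (n + 1)) (y : Fin n → ℝ) : B.lam i y = B.dlam i y + B.c i := rfl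

lemma lam_x (i j : Fin (n + 1)) : B.lam i (B.x j) = if i = j then 1 else 0 :=
  B.lam_vertex i j

lemma dlam_x (i j : Fin (n + 1)) :
    B.dlam i (B.x j) = (if i = j then 1 else 0) - B.c i := by
  have := B.lam_vertex i j; linarith

lemma wedge_apply {k : ℕ} (f : Fin k → ((Fin n → ℝ) →ₗ[ℝ] ℝ)) (v : Fin k → Fin n → ℝ) :
    wedge f v = (Matrix.of fun j i => f i (v j)).det := rfl

lemma whitney_apply_det {k : ℕ} (σ : Fin (k + 1) → Fin (n + 1)) (y : Fin n → ℝ)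
    (v : Fin k → Fin n → ℝ) :
    B.whitney σ y v =
      (Matrix.of fun i a => Fin.cases (motive := fun _ => ℝ) (B.lam (σ a) y)
        (fun j => B.dlam (σ a) (v j)) i).det := by
  rw [Matrix.det_succ_row_zero]
  simp only [whitney]
  rw [altSum_apply]
  simp only [AlternatingMap.smul_apply, smul_eq_mul]
  refine Finset.sum_congr rfl fun i _ => ?_
  rw [wedge_apply]
  have h0 : (Matrix.of fun i a => Fin.cases (motive := fun _ => ℝ) (B.lam (σ a) y)
      (fun j => B.dlam (σ a) (v j)) i) 0 i = B.lam (σ i) y := by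
    simp
  have h1 : ((Matrix.of fun i a => Fin.cases (motive := fun _ => ℝ) (B.lam (σ a) y)
      (fun j => B.dlam (σ a) (v j)) i).submatrix Fin.succ i.succAbove) =
      Matrix.of fun j b => B.dlam (σ (i.succAbove b)) (v j) := by
    ext j b
    simp [Matrix.submatrix_apply]
  rw [h0, h1]

lemma whitney_scale {k : ℕ} (σ : Fin (k + 1) → Fin (n + 1)) (y z : Fin n → ℝ)
    (v w : Fin k → Fin n → ℝ) (t : ℝ) (s : Fin k → ℝ)
    (h0 : ∀ a, B.lam (σ a) y = t * B.lam (σ a) z)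
    (h1 : ∀ j a, B.dlam (σ a) (v j) = B.dlam (σ a) (w j) + t * s j * B.lam (σ a) z) :
    B.whitney σ y v = t * B.whitney σ z w := by
  rw [whitney_apply_det, whitney_apply_det]
  set M : Matrix (Fin (k + 1)) (Fin (k + 1)) ℝ :=
    Matrix.of fun i a => Fin.cases (motive := fun _ => ℝ) (B.lam (σ a) z)
      (fun j => B.dlam (σ a) (w j)) i with hM
  set A : Matrix (Fin (k + 1)) (Fin (k + 1)) ℝ :=
    Matrix.of fun i b => Fin.cases (motive := fun _ => ℝ) (if b = 0 then t else 0)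
      (fun j => if b = j.succ then 1 else if b = 0 then t * s j else 0) i with hA
  have hAM : (Matrix.of fun i a => Fin.cases (motive := fun _ => ℝ) (B.lam (σ a) y)
      (fun j => B.dlam (σ a) (v j)) i) = A * M := by
    ext i a
    induction i using Fin.cases with
    | zero =>
      rw [Matrix.mul_apply]
      have : ∀ b : Fin (k + 1), A 0 b * M b a = if b = 0 then t * M b a else 0 := by
        intro b; simp only [hA, Matrix.of_apply, Fin.cases_zero]; split_ifs <;> simp
      rw [Finset.sum_congr rfl fun b _ => this b, Finset.sum_ite_eq' Finset.univ 0
        (fun b => t * M b a)]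
      simp [hM, Matrix.of_apply, h0 a]
    | succ j =>
      rw [Matrix.mul_apply]
      have hsplit : ∀ b : Fin (k + 1), A j.succ b * M b a =
          (if b = j.succ then M b a else 0) + (if b = 0 then t * s j * M b a else 0) := by
        intro b
        simp only [hA, Matrix.of_apply, Fin.cases_succ]
        rcases eq_or_ne b j.succ with hb | hb
        · subst hb
          simp [(Fin.succ_ne_zero j)]
        · rcases eq_or_ne b 0 with hb0 | hb0
          · subst hb0; simp [Ne.symm (Fin.succ_ne_zero j), mul_comm]
          · simp [hb, hb0]
      rw [Finset.sum_congr rfl fun b _ => hsplit b, Finset.sum_add_distrib,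
        Finset.sum_ite_eq' Finset.univ j.succ (fun b => M b a),
        Finset.sum_ite_eq' Finset.univ 0 (fun b => t * s j * M b a)]
      simp [hM, Matrix.of_apply, h1 j a]
  rw [hAM, Matrix.det_mul]
  have hdetA : A.det = t := by
    rw [Matrix.det_of_lowerTriangular A]
    · rw [Fin.prod_univ_succ]
      have h00 : A 0 0 = t := by simp [hA]
      have hjj : ∀ j : Fin k, A j.succ j.succ = 1 := by intro j; simp [hA]
      simp [h00, hjj]
    · intro i b hib
      have hib' : (i : Fin (k+1)) < b := hib
      induction i using Fin.cases with
      | zero =>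
        have : b ≠ 0 := by rintro rfl; exact absurd hib' (lt_irrefl _)
        simp [hA, this]
      | succ j =>
        have hb1 : b ≠ j.succ := by rintro rfl; exact absurd hib' (lt_irrefl _)
        have hb0 : b ≠ 0 := by
          rintro rfl
          exact absurd hib' (by simp [Fin.lt_def])
        simp [hA, hb1, hb0]
  rw [hdetA]

lemma lamPow_scale (α : Fin (n + 1) → ℕ) (y z : Fin n → ℝ) (t : ℝ)
    (h0 : ∀ i, α i ≠ 0 → B.lam i y = t * B.lam i z) :
    B.lamPow α y = t ^ (∑ i, α i) * B.lamPow α z := by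
  unfold lamPow
  rw [← Finset.prod_pow_eq_pow_sum, ← Finset.prod_mul_distrib]
  refine Finset.prod_congr rfl fun i _ => ?_
  by_cases hα : α i = 0
  · simp [hα]
  · rw [h0 i hα, mul_pow]

end Simplex

end Aux

/-- any linear combination of the forms `λ^α φ_σ` with `⟦α,σ⟧ ⊆ S` whose trace on
the face `f_S` vanishes is identically zero (well-definedness of the barycentric extension
operator for `P⁻_r Λ^k`). -/
theorem stmt9 {n : ℕ} (hn : 1 ≤ n) (B : Simplex n) (r k : ℕ) (hr : 1 ≤ r) (hk : k ≤ n)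
    (S : Finset (Fin (n + 1))) (hS : S.Nonempty)
    (ω : (Fin n → ℝ) → ((Fin n → ℝ) [⋀^Fin k]→ₗ[ℝ] ℝ))
    (hω : ω ∈ Submodule.span ℝ
      {η | ∃ (α : Fin (n + 1) → ℕ) (σ : Fin (k + 1) → Fin (n + 1)),
        (∑ i, α i) = r - 1 ∧ StrictMono σ ∧ suppF α ∪ rangeF σ ⊆ S ∧
        η = fun y => B.lamPow α y • B.whitney σ y})
    (h : VanishTrace B S ω) : ω = 0 := by
  
  classical
  -- continuity of barycentric coordinates
  have hlamc : ∀ i, Continuous (B.lam i) := fun i =>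
    ((B.dlam i).continuous_of_finiteDimensional).add continuous_const
  -- continuity of ω evaluated at fixed vectors
  have hcont : ∀ v : Fin k → Fin n → ℝ, Continuous fun y => ω y v := by
    intro v
    refine Submodule.span_induction ?_ ?_ ?_ ?_ hω
    ·
      intro η hη
      obtain ⟨α, σ, hα, hmono, hsub, rfl⟩ := hη
      simp only [AlternatingMap.smul_apply, smul_eq_mul]
      have hW : Continuous fun y => B.whitney σ y v := by
        have hfun : (fun y => B.whitney σ y v) = fun y =>
            ∑ i : Fin (k + 1), ((-1 : ℝ) ^ (i : ℕ) * B.lam (σ i) y) *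
              (wedge fun j : Fin k => B.dlam (σ (i.succAbove j))) v := by
          funext y
          simp only [Simplex.whitney]
          rw [Simplex.altSum_apply]
          simp only [AlternatingMap.smul_apply, smul_eq_mul]
        rw [hfun]
        exact continuous_finset_sum _ fun i _ =>
          (continuous_const.mul (hlamc (σ i))).mul continuous_const
      exact (continuous_finset_prod _ fun i _ => (hlamc i).pow (α i)).mul hW
    · simpa using (continuous_const : Continuous fun _ : Fin n → ℝ => (0 : ℝ))
    ·
      intro η₁ η₂ _ _ hc₁ hc₂
      have heq : (fun y => (η₁ + η₂) y v) = fun y => η₁ y v + η₂ y v := by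
        funext y; simp
      rw [heq]; exact hc₁.add hc₂
    ·
      intro a η _ hc
      have heq : (fun y => (a • η) y v) = fun y => a * η y v := by
        funext y; simp
      rw [heq]; exact continuous_const.mul hc
  -- key step: ω vanishes wherever ∑_{i ∈ S} λ_i ≠ 0
  have key : ∀ (y : Fin n → ℝ) (v : Fin k → Fin n → ℝ),
      (∑ i ∈ S, B.lam i y) ≠ 0 → ω y v = 0 := by
    intro y v ht
    obtain ⟨p, hp⟩ := hS
    set t : ℝ := ∑ i ∈ S, B.lam i y with htdef
    set z : Fin n → ℝ := ∑ i ∈ S, (B.lam i y / t) • B.x i with hzdef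
    set s : Fin k → ℝ := fun j => (∑ i ∈ S, B.dlam i (v j)) / t with hsdef
    set w : Fin k → Fin n → ℝ := fun j =>
      ∑ i ∈ S, (B.dlam i (v j) - s j * B.lam i y) • (B.x i - B.x p) with hwdef
    have hsum1 : ∑ i ∈ S, B.lam i y / t = 1 := by
      rw [← Finset.sum_div, ← htdef, div_self ht]
    -- barycentric coordinates of z
    have hz : ∀ m, B.lam m z = if m ∈ S then B.lam m y / t else 0 := by
      intro m
      have e1 : B.lam m z = (∑ i ∈ S, (B.lam i y / t) * B.dlam m (B.x i)) + B.c m := by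
        rw [Simplex.lam_def, hzdef, map_sum]
        congr 1
        exact Finset.sum_congr rfl fun i _ => by rw [map_smul, smul_eq_mul]
      rw [e1]
      have e2 : B.c m = ∑ i ∈ S, (B.lam i y / t) * B.c m := by
        rw [← Finset.sum_mul, hsum1, one_mul]
      rw [e2, ← Finset.sum_add_distrib]
      have e3 : ∀ i ∈ S, B.lam i y / t * B.dlam m (B.x i) + B.lam i y / t * B.c m =
          if m = i then B.lam i y / t else 0 := by
        intro i _
        rw [← mul_add, B.lam_vertex m i]
        split_ifs <;> simp
      rw [Finset.sum_congr rfl e3, Finset.sum_ite_eq S m (fun i => B.lam i y / t)]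
    -- dλ values on the w j
    have hwsum : ∀ j, ∑ i ∈ S, (B.dlam i (v j) - s j * B.lam i y) = 0 := by
      intro j
      rw [Finset.sum_sub_distrib, ← Finset.mul_sum, ← htdef, hsdef]
      field_simp
      ring
    have hw : ∀ j m, B.dlam m (w j) =
        if m ∈ S then B.dlam m (v j) - s j * B.lam m y else 0 := by
      intro j m
      have e1 : B.dlam m (w j) = ∑ i ∈ S, (B.dlam i (v j) - s j * B.lam i y) *
          ((if m = i then 1 else 0) - (if m = p then 1 else 0)) := by
        rw [hwdef, map_sum]
        refine Finset.sum_congr rfl fun i _ => ?_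
        rw [map_smul, smul_eq_mul, map_sub, B.dlam_x m i, B.dlam_x m p]
        ring_nf
      rw [e1]
      have e2 : ∀ i ∈ S, (B.dlam i (v j) - s j * B.lam i y) *
          ((if m = i then 1 else 0) - (if m = p then 1 else 0)) =
          (if m = i then B.dlam i (v j) - s j * B.lam i y else 0) -
          (if m = p then (B.dlam i (v j) - s j * B.lam i y) else 0) := by
        intro i _; split_ifs <;> ring
      rw [Finset.sum_congr rfl e2, Finset.sum_sub_distrib,
        Finset.sum_ite_eq S m (fun i => B.dlam i (v j) - s j * B.lam i y)]
      rcases eq_or_ne m p with rfl | hmp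
      · simp [hp, hwsum j]
      · simp [hmp]
    have hface : ∀ m ∉ S, B.lam m z = 0 := by
      intro m hm; rw [hz]; simp [hm]
    have htan : ∀ j, w j ∈ B.tangent S := by
      intro j m hm; rw [hw]; simp [hm]
    have hzero : ω z w = 0 := h z hface w htan
    -- the scaling identity, by induction over the span
    have main : ω y v = t ^ r * ω z w := by
      refine Submodule.span_induction ?_ ?_ ?_ ?_ hω
      ·
        intro η hη
        obtain ⟨α, σ, hα, hmono, hsub, rfl⟩ := hη
        simp only [AlternatingMap.smul_apply, smul_eq_mul]
        have hmemS : ∀ i, α i ≠ 0 → i ∈ S := by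
          intro i hi
          exact hsub (Finset.mem_union_left _ (by simp [suppF, hi]))
        have hσS : ∀ a, σ a ∈ S := by
          intro a
          exact hsub (Finset.mem_union_right _ (by simp [rangeF]))
        have hscale : ∀ i ∈ S, B.lam i y = t * B.lam i z := by
          intro i hi
          rw [hz i]
          simp only [hi, if_true]
          rw [mul_div_cancel₀ _ ht]
        have hLP : B.lamPow α y = t ^ (r - 1) * B.lamPow α z := by
          rw [← hα]
          exact B.lamPow_scale α y z t fun i hi => hscale i (hmemS i hi)
        have hWh : B.whitney σ y v = t * B.whitney σ z w := by
          refine B.whitney_scale σ y z v w t s (fun a => hscale _ (hσS a)) ?_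
          intro j a
          rw [hw j (σ a)]
          simp only [hσS a, if_true]
          rw [hscale _ (hσS a)]
          ring
        rw [hLP, hWh]
        have : t ^ (r - 1) * t = t ^ r := by
          rw [← pow_succ, Nat.sub_add_cancel hr]
        calc t ^ (r - 1) * B.lamPow α z * (t * B.whitney σ z w)
            = (t ^ (r - 1) * t) * (B.lamPow α z * B.whitney σ z w) := by ring
          _ = t ^ r * (B.lamPow α z * B.whitney σ z w) := by rw [this]
      · simp
      ·
        intro η₁ η₂ _ _ h₁ h₂
        simp only [Pi.add_apply, AlternatingMap.add_apply, h₁, h₂]; ring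
      ·
        intro a η _ h₁
        simp only [Pi.smul_apply, AlternatingMap.smul_apply, smul_eq_mul, h₁]; ring
    rw [main, hzero, mul_zero]
  -- conclude
  by_cases hU : S = Finset.univ
  · funext y
    refine AlternatingMap.ext fun v => ?_
    subst hU
    have := h y (fun i hi => absurd (Finset.mem_univ i) hi) v
      (fun j i hi => absurd (Finset.mem_univ i) hi)
    simpa using this
  · obtain ⟨m, hm⟩ : ∃ m, m ∉ S := by
      by_contra hc
      push_neg at hc
      exact hU (Finset.eq_univ_iff_forall.2 hc)
    obtain ⟨p, hp⟩ := hS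
    set d : Fin n → ℝ := B.x p - B.x m with hddef
    have hd : ∑ i ∈ S, B.dlam i d = 1 := by
      have : ∀ i ∈ S, B.dlam i d = (if i = p then 1 else 0) - (if i = m then 1 else 0) := by
        intro i _
        rw [hddef, map_sub, B.dlam_x i p, B.dlam_x i m]
        ring
      rw [Finset.sum_congr rfl this, Finset.sum_sub_distrib,
        Finset.sum_ite_eq' S p (fun _ => (1 : ℝ)), Finset.sum_ite_eq' S m (fun _ => (1 : ℝ))]
      simp [hp, hm]
    have hshift : ∀ (y : Fin n → ℝ) (τ : ℝ),
        ∑ i ∈ S, B.lam i (y + τ • d) = (∑ i ∈ S, B.lam i y) + τ := by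
      intro y τ
      have : ∀ i ∈ S, B.lam i (y + τ • d) = B.lam i y + τ * B.dlam i d := by
        intro i _
        rw [Simplex.lam_def, map_add, map_smul, smul_eq_mul, Simplex.lam_def]
        ring
      rw [Finset.sum_congr rfl this, Finset.sum_add_distrib, ← Finset.mul_sum, hd, mul_one]
    funext y
    refine AlternatingMap.ext fun v => ?_
    show ω y v = (0 : (Fin n → ℝ) [⋀^Fin k]→ₗ[ℝ] ℝ) v
    rw [AlternatingMap.zero_apply]
    by_cases hty : (∑ i ∈ S, B.lam i y) = 0
    · have hg : ∀ τ : ℝ, τ ≠ 0 → ω (y + τ • d) v = 0 := by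
        intro τ hτ
        refine key _ v ?_
        rw [hshift, hty, zero_add]
        exact hτ
      have hcg : Continuous fun τ : ℝ => ω (y + τ • d) v :=
        (hcont v).comp (continuous_const.add (continuous_id.smul continuous_const))
      have heq : (fun τ : ℝ => ω (y + τ • d) v) = fun _ => 0 := by
        refine Continuous.ext_on (dense_compl_singleton (0 : ℝ)) hcg continuous_const ?_
        intro τ hτ
        exact hg τ hτ
      have := congrFun heq 0
      simpa using this
    · exact key y v hty
end
end
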